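/- arXiv:2604.24241 — 4 statements merged into one kernel-verified Lean document; each statement's English description precedes it below -/
import Mathlib

section
/- Let G be a 1-binding graph and let S be a nonempty subset of V(G) with |S| = s such that the graph G − S has at least s + 2 odd components (connected components with an odd number of vertices). Then at most s of the odd components of G − S consist of a single vertex; equivalently, at least two odd components of G − S have at least 3 vertices. -/
open scoped Classical

/-- The join `G₁ ∨ G₂` of two graphs: all edges within each part, plus all
possible edges between the two parts. -/
def graphJoin {α β : Type*} (G : SimpleGraph α) (H : SimpleGraph β) : SimpleGraph (α ⊕ β) where
  Adj u v := match u, v with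
    | Sum.inl u, Sum.inl v => G.Adj u v
    | Sum.inr u, Sum.inr v => H.Adj u v
    | Sum.inl _, Sum.inr _ => True
    | Sum.inr _, Sum.inl _ => True
  symm := ⟨fun u v => by cases u <;> cases v <;> simp [SimpleGraph.adj_comm]⟩
  loopless := ⟨fun u => by cases u <;> simp⟩

/-- The `A_α`-spectral radius of a finite simple graph: the largest (real) eigenvalue,
i.e. the supremum of the real roots of the characteristic polynomial, of the matrix
`A_α(G) = α·D(G) + (1-α)·A(G)`. -/
noncomputable def rhoAlpha (a : ℝ) {V : Type*} [Fintype V] [DecidableEq V]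
    (G : SimpleGraph V) : ℝ :=
  sSup {μ : ℝ | (Matrix.charpoly
    (a • Matrix.diagonal (fun v => (G.degree v : ℝ)) + (1 - a) • G.adjMatrix ℝ)).IsRoot μ}

/-- The neighbourhood `N_G(X)` of a set of vertices `X`: all vertices having a
neighbour in `X`. -/
def nbhd {V : Type*} (G : SimpleGraph V) (X : Set V) : Set V :=
  {v | ∃ x ∈ X, G.Adj x v}

/-- `G` is 1-binding, i.e. `bind(G) ≥ 1`: every nonempty `X ⊆ V(G)` with
`N_G(X) ≠ V(G)` satisfies `|N_G(X)|/|X| ≥ 1`. -/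
def IsOneBinding {V : Type*} [Fintype V] (G : SimpleGraph V) : Prop :=
  ∀ X : Set V, X.Nonempty → nbhd G X ≠ Set.univ → X.ncard ≤ (nbhd G X).ncard

/-- The graph `K_1 ∨ (K_{n-5} ∪ K_3 ∪ K_1)`. -/
def specialGraph (n : ℕ) :
    SimpleGraph (Fin 1 ⊕ ((Fin (n - 5) ⊕ Fin 3) ⊕ Fin 1)) :=
  graphJoin (⊤ : SimpleGraph (Fin 1))
    (((⊤ : SimpleGraph (Fin (n - 5))) ⊕g (⊤ : SimpleGraph (Fin 3))) ⊕g
      (⊤ : SimpleGraph (Fin 1)))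

/-- The graph `K_s ∨ (K_{n-2s-3} ∪ K_3 ∪ sK_1)`. -/
def extremalGraph (s n : ℕ) :
    SimpleGraph (Fin s ⊕ ((Fin (n - 2 * s - 3) ⊕ Fin 3) ⊕ Fin s)) :=
  graphJoin (⊤ : SimpleGraph (Fin s))
    (((⊤ : SimpleGraph (Fin (n - 2 * s - 3))) ⊕g (⊤ : SimpleGraph (Fin 3))) ⊕g
      (⊥ : SimpleGraph (Fin s)))

/-- **Claim.** Let `G` be a 1-binding graph and `S ⊆ V(G)` nonempty with `|S| = s` such
that `G - S` has at least `s + 2` odd components.  Then at most `s` of the odd components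
of `G - S` are single vertices; equivalently, at least two odd components of `G - S`
have at least `3` vertices. -/
theorem oneBinding_odd_components
    {V : Type*} [Fintype V] [DecidableEq V] (G : SimpleGraph V)
    (hbind : IsOneBinding G)
    (S : Set V) (hS : S.Nonempty) (s : ℕ) (hs : S.ncard = s)
    (hodd : s + 2 ≤
      {c : (G.induce (Sᶜ : Set V)).ConnectedComponent | Odd c.supp.ncard}.ncard) :
    {c : (G.induce (Sᶜ : Set V)).ConnectedComponent |
        Odd c.supp.ncard ∧ c.supp.ncard = 1}.ncard ≤ s ∧
    2 ≤ {c : (G.induce (Sᶜ : Set V)).ConnectedComponent |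
        Odd c.supp.ncard ∧ 3 ≤ c.supp.ncard}.ncard := by
  classical
  obtain ⟨x₀, hx₀⟩ := hS
  set H := G.induce (Sᶜ : Set V) with hH
  set A : Set H.ConnectedComponent := {c | Odd c.supp.ncard ∧ c.supp.ncard = 1} with hA
  -- choice of the unique vertex in a singleton component
  have key : A.ncard ≤ s := by
    by_contra hcon
    push_neg at hcon
    -- for c ∈ A, supp c has a unique element
    have hsing : ∀ c ∈ A, ∃ v : (Sᶜ : Set V), c.supp = {v} := by
      intro c hc
      exact Set.ncard_eq_one.mp hc.2
    let vtx : H.ConnectedComponent → V := fun c =>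
      if h : ∃ v : (Sᶜ : Set V), c.supp = {v} then ((h.choose : (Sᶜ : Set V)) : V) else x₀
    have hvtx_mem : ∀ c ∈ A, vtx c ∈ (Sᶜ : Set V) := by
      intro c hc
      have h := hsing c hc
      simp only [vtx, dif_pos h]
      exact (h.choose : (Sᶜ : Set V)).2
    have hvtx_supp : ∀ c ∈ A, ∀ w : (Sᶜ : Set V), (w : V) = vtx c → w ∈ c.supp := by
      intro c hc w hw
      have h := hsing c hc
      simp only [vtx, dif_pos h] at hw
      rw [h.choose_spec]
      exact Subtype.val_injective hw
    have hinj : Set.InjOn vtx A := by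
      intro c hc c' hc' hcc
      have h1 : (⟨vtx c, hvtx_mem c hc⟩ : (Sᶜ : Set V)) ∈ c.supp :=
        hvtx_supp c hc _ rfl
      have h2 : (⟨vtx c, hvtx_mem c hc⟩ : (Sᶜ : Set V)) ∈ c'.supp :=
        hvtx_supp c' hc' _ hcc
      rw [SimpleGraph.ConnectedComponent.mem_supp_iff] at h1 h2
      rw [← h1, ← h2]
    set X : Set V := vtx '' A with hX
    have hXsub : X ⊆ Sᶜ := by
      rintro _ ⟨c, hc, rfl⟩
      exact hvtx_mem c hc
    have hXne : X.Nonempty := by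
      have : A.Nonempty := by
        rw [← Set.ncard_pos]
        omega
      exact this.image vtx
    have hnb : nbhd G X ⊆ S := by
      rintro u ⟨x, ⟨c, hc, rfl⟩, hadj⟩
      by_contra hu
      have hu' : u ∈ (Sᶜ : Set V) := hu
      -- then ⟨u, hu'⟩ is adjacent in H to the singleton vertex
      have h := hsing c hc
      have hw : (⟨vtx c, hvtx_mem c hc⟩ : (Sᶜ : Set V)) ∈ c.supp :=
        hvtx_supp c hc _ rfl
      have hadj' : H.Adj ⟨vtx c, hvtx_mem c hc⟩ ⟨u, hu'⟩ := by
        simpa [hH, SimpleGraph.comap_adj] using hadj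
      have hmem : (⟨u, hu'⟩ : (Sᶜ : Set V)) ∈ c.supp := by
        rw [SimpleGraph.ConnectedComponent.mem_supp_iff] at hw ⊢
        rw [← hw]
        exact (SimpleGraph.ConnectedComponent.sound hadj'.symm.reachable)
      rw [h.choose_spec] at hw hmem
      have : (⟨u, hu'⟩ : (Sᶜ : Set V)) = ⟨vtx c, hvtx_mem c hc⟩ := by
        rw [hw, hmem]
      have : u = vtx c := congrArg Subtype.val this
      exact hadj.ne this.symm
    have hnbne : nbhd G X ≠ Set.univ := by
      intro h
      obtain ⟨x, hx⟩ := hXne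
      have : x ∈ nbhd G X := by rw [h]; trivial
      exact hXsub hx (hnb this)
    have h1 := hbind X hXne hnbne
    have h2 : (nbhd G X).ncard ≤ S.ncard := Set.ncard_le_ncard hnb (Set.toFinite S)
    have h3 : X.ncard = A.ncard := Set.ncard_image_of_injOn hinj
    omega
  refine ⟨key, ?_⟩
  set B : Set H.ConnectedComponent := {c | Odd c.supp.ncard ∧ 3 ≤ c.supp.ncard} with hB
  have hsub : {c : H.ConnectedComponent | Odd c.supp.ncard} ⊆ A ∪ B := by
    intro c hc
    have hodd' : Odd c.supp.ncard := hc
    rcases Nat.lt_or_ge c.supp.ncard 3 with h | h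
    · left
      refine ⟨hodd', ?_⟩
      obtain ⟨k, hk⟩ := hodd'
      omega
    · right; exact ⟨hodd', h⟩
  have h4 : {c : H.ConnectedComponent | Odd c.supp.ncard}.ncard ≤ (A ∪ B).ncard :=
    Set.ncard_le_ncard hsub (Set.toFinite _)
  have h5 : (A ∪ B).ncard ≤ A.ncard + B.ncard := Set.ncard_union_le A B
  omega
end

section
/- Let α ∈ [0,1) and let n ≥ 6 be an integer. Then ρ_α(K_1 ∨ (K_{n−5} ∪ K_3 ∪ K_1)) is a root of the quartic polynomial φ(x) = x⁴ − ((1+α)n + 2α − 4)x³ + (αn² + (2α² − α + 1)n + α² − 6α − 11)x² − ((2α² + 2α)n² + (α³ − 11α² − 2α − 6)n + 32α² − 62α + 32)x + (α³ + 2α²)n² − (9α³ + 5α² + 2α + 2)n + 34α³ − 39α² + 8α + 12, and in fact it is the largest real root of φ. -/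
open scoped Classical

/-! ### Auxiliary material for the proof -/

section Spectral

lemma aux_charpoly_eval_eq_det {V : Type*} [Fintype V] [DecidableEq V] (M : Matrix V V ℝ)
    (μ : ℝ) :
    (Matrix.charpoly M).eval μ = Matrix.det (μ • (1 : Matrix V V ℝ) - M) := by
  rw [Matrix.charpoly, ← Polynomial.coe_evalRingHom, RingHom.map_det]
  congr 1
  ext i j
  by_cases h : i = j
  · subst h
    simp [Matrix.charmatrix_apply_eq, Matrix.one_apply, Matrix.sub_apply]
  · simp [Matrix.charmatrix_apply_ne _ _ _ h, Matrix.one_apply_ne h, Matrix.sub_apply]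

lemma aux_charpoly_isRoot_iff {V : Type*} [Fintype V] [DecidableEq V] (M : Matrix V V ℝ)
    (μ : ℝ) :
    (Matrix.charpoly M).IsRoot μ ↔ ∃ v, v ≠ 0 ∧ M.mulVec v = μ • v := by
  rw [Polynomial.IsRoot, aux_charpoly_eval_eq_det, ← Matrix.exists_mulVec_eq_zero_iff]
  constructor
  · rintro ⟨v, hv, h⟩
    refine ⟨v, hv, ?_⟩
    rw [Matrix.sub_mulVec, Matrix.smul_mulVec, Matrix.one_mulVec, sub_eq_zero] at h
    exact h.symm
  · rintro ⟨v, hv, h⟩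
    refine ⟨v, hv, ?_⟩
    rw [Matrix.sub_mulVec, Matrix.smul_mulVec, Matrix.one_mulVec, sub_eq_zero, h]

lemma aux_diag_le_csSup_roots {V : Type*} [Fintype V] [DecidableEq V] (M : Matrix V V ℝ)
    (hM : M.IsHermitian) (w : V) :
    M w w ≤ sSup {μ : ℝ | (Matrix.charpoly M).IsRoot μ} := by
  set S := {μ : ℝ | (Matrix.charpoly M).IsRoot μ} with hS
  have hfin : S.Finite := Polynomial.finite_setOf_isRoot (Matrix.charpoly_monic M).ne_zero
  have hbdd : BddAbove S := hfin.bddAbove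
  have heig : ∀ i, hM.eigenvalues i ∈ S := by
    intro i
    rw [hS, Set.mem_setOf_eq, aux_charpoly_isRoot_iff]
    refine ⟨⇑(hM.eigenvectorBasis i), ?_, hM.mulVec_eigenvectorBasis i⟩
    have h0 := hM.eigenvectorBasis.orthonormal.ne_zero i
    intro h
    apply h0
    apply (EuclideanSpace.equiv V ℝ).injective
    ext x
    exact congrFun h x
  set U : Matrix V V ℝ := (hM.eigenvectorUnitary : Matrix V V ℝ) with hUdef
  have hU : U * star U = 1 := Matrix.mem_unitaryGroup_iff.mp hM.eigenvectorUnitary.2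
  have hsum1 : ∑ k, U w k * U w k = 1 := by
    have := congrFun (congrFun hU w) w
    rw [Matrix.mul_apply] at this
    simpa [Matrix.star_apply, Matrix.one_apply] using this
  have hdiag : M w w = ∑ k, hM.eigenvalues k * (U w k * U w k) := by
    conv_lhs => rw [hM.spectral_theorem, Unitary.conjStarAlgAut_apply]
    rw [Matrix.mul_apply]
    congr 1
    ext k
    rw [Matrix.mul_diagonal]
    simp [hUdef, Matrix.star_apply]
    ring
  rw [hdiag]
  calc ∑ k, hM.eigenvalues k * (U w k * U w k)
      ≤ ∑ k, sSup S * (U w k * U w k) := by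
        apply Finset.sum_le_sum
        intro k _
        exact mul_le_mul_of_nonneg_right (le_csSup hbdd (heig k)) (mul_self_nonneg _)
    _ = sSup S := by rw [← Finset.mul_sum, hsum1, mul_one]

end Spectral

section Det4

set_option maxHeartbeats 1000000 in
lemma aux_det_fin_four (M : Matrix (Fin 4) (Fin 4) ℝ) :
    M.det =
      M 0 0 * (M 1 1 * (M 2 2 * M 3 3 - M 2 3 * M 3 2) - M 1 2 * (M 2 1 * M 3 3 - M 2 3 * M 3 1)
        + M 1 3 * (M 2 1 * M 3 2 - M 2 2 * M 3 1))
      - M 0 1 * (M 1 0 * (M 2 2 * M 3 3 - M 2 3 * M 3 2) - M 1 2 * (M 2 0 * M 3 3 - M 2 3 * M 3 0)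
        + M 1 3 * (M 2 0 * M 3 2 - M 2 2 * M 3 0))
      + M 0 2 * (M 1 0 * (M 2 1 * M 3 3 - M 2 3 * M 3 1) - M 1 1 * (M 2 0 * M 3 3 - M 2 3 * M 3 0)
        + M 1 3 * (M 2 0 * M 3 1 - M 2 1 * M 3 0))
      - M 0 3 * (M 1 0 * (M 2 1 * M 3 2 - M 2 2 * M 3 1) - M 1 1 * (M 2 0 * M 3 2 - M 2 2 * M 3 0)
        + M 1 2 * (M 2 0 * M 3 1 - M 2 1 * M 3 0)) := by
  rw [Matrix.det_succ_row_zero]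
  simp [Fin.sum_univ_succ, Matrix.det_fin_three, Fin.succAbove,
    show (Fin.succ 2 : Fin 4) = 3 from rfl, show (Fin.castSucc 2 : Fin 4) = 2 from rfl,
    show ((1:Fin 4) < 3) from by decide]
  ring

/-- The quotient matrix of the equitable partition of `specialGraph n`. -/
noncomputable def Bq (a r : ℝ) : Matrix (Fin 4) (Fin 4) ℝ :=
  !![a*(r-1), (1-a)*(r-5), 3*(1-a), (1-a);
     (1-a), a*(r-5)+(1-a)*(r-6), 0, 0;
     (1-a), 0, 3*a+2*(1-a), 0;
     (1-a), 0, 0, a]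

/-- The "sum" version of the quotient matrix. -/
noncomputable def Btq (a r : ℝ) : Matrix (Fin 4) (Fin 4) ℝ :=
  !![a*(r-1), (1-a), (1-a), (1-a);
     (1-a)*(r-5), a*(r-5)+(1-a)*(r-6), 0, 0;
     3*(1-a), 0, 3*a+2*(1-a), 0;
     (1-a), 0, 0, a]

/-- The quartic from the statement. -/
noncomputable def phiP (a r x : ℝ) : ℝ :=
  x ^ 4 - ((1 + a) * r + 2 * a - 4) * x ^ 3
      + (a * r ^ 2 + (2 * a ^ 2 - a + 1) * r + a ^ 2 - 6 * a - 11) * x ^ 2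
      - ((2 * a ^ 2 + 2 * a) * r ^ 2 + (a ^ 3 - 11 * a ^ 2 - 2 * a - 6) * r
          + 32 * a ^ 2 - 62 * a + 32) * x
      + (a ^ 3 + 2 * a ^ 2) * r ^ 2 - (9 * a ^ 3 + 5 * a ^ 2 + 2 * a + 2) * r
          + 34 * a ^ 3 - 39 * a ^ 2 + 8 * a + 12

lemma aux_detBq (a r x : ℝ) :
    Matrix.det (x • (1 : Matrix (Fin 4) (Fin 4) ℝ) - Bq a r) = phiP a r x := by
  rw [aux_det_fin_four]
  simp [Bq, phiP, Matrix.sub_apply, Matrix.one_apply, Matrix.vecHead, Matrix.vecTail]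
  ring

lemma aux_detBtq (a r x : ℝ) :
    Matrix.det (x • (1 : Matrix (Fin 4) (Fin 4) ℝ) - Btq a r) = phiP a r x := by
  rw [aux_det_fin_four]
  simp [Btq, phiP, Matrix.sub_apply, Matrix.one_apply, Matrix.vecHead, Matrix.vecTail]
  ring

lemma aux_mulVec4 (B : Matrix (Fin 4) (Fin 4) ℝ) (y : Fin 4 → ℝ) (k : Fin 4) :
    B.mulVec y k = B k 0 * y 0 + B k 1 * y 1 + B k 2 * y 2 + B k 3 * y 3 := by
  simp [Matrix.mulVec, dotProduct, Fin.sum_univ_four]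

end Det4

section GraphSums

variable {n : ℕ}

lemma aux_sum_ite_ne {ι : Type*} [Fintype ι] [DecidableEq ι] (i : ι) (f : ι → ℝ) :
    ∑ j, (if i = j then 0 else f j) = (∑ j, f j) - f i := by
  have h : ∀ j, (if i = j then 0 else f j) = f j - (if i = j then f j else 0) := by
    intro j; by_cases h : i = j <;> simp [h]
  simp_rw [h]
  rw [Finset.sum_sub_distrib, Finset.sum_ite_eq]
  simp

lemma aux_sum_Vn (f : (Fin 1 ⊕ ((Fin (n - 5) ⊕ Fin 3) ⊕ Fin 1)) → ℝ) :
    ∑ u, f u = f (Sum.inl 0) + ((∑ i, f (Sum.inr (Sum.inl (Sum.inl i)))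
      + ∑ i, f (Sum.inr (Sum.inl (Sum.inr i)))) + f (Sum.inr (Sum.inr 0))) := by
  rw [Fintype.sum_sum_type, Fintype.sum_sum_type, Fintype.sum_sum_type]
  simp

lemma aux_nsum_a0 (v : (Fin 1 ⊕ ((Fin (n - 5) ⊕ Fin 3) ⊕ Fin 1)) → ℝ) :
    ∑ u, (if (specialGraph n).Adj (Sum.inl 0) u then v u else 0)
      = (∑ i, v (Sum.inr (Sum.inl (Sum.inl i)))) + (∑ i, v (Sum.inr (Sum.inl (Sum.inr i))))
        + v (Sum.inr (Sum.inr 0)) := by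
  rw [aux_sum_Vn]
  simp [specialGraph, graphJoin, SimpleGraph.sum]

lemma aux_nsum_c2 (i : Fin (n - 5)) (v : (Fin 1 ⊕ ((Fin (n - 5) ⊕ Fin 3) ⊕ Fin 1)) → ℝ) :
    ∑ u, (if (specialGraph n).Adj (Sum.inr (Sum.inl (Sum.inl i))) u then v u else 0)
      = v (Sum.inl 0) + ((∑ j, v (Sum.inr (Sum.inl (Sum.inl j)))) - v (Sum.inr (Sum.inl (Sum.inl i)))) := by
  rw [aux_sum_Vn]
  simp [specialGraph, graphJoin, SimpleGraph.sum, aux_sum_ite_ne]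

lemma aux_nsum_c3 (i : Fin 3) (v : (Fin 1 ⊕ ((Fin (n - 5) ⊕ Fin 3) ⊕ Fin 1)) → ℝ) :
    ∑ u, (if (specialGraph n).Adj (Sum.inr (Sum.inl (Sum.inr i))) u then v u else 0)
      = v (Sum.inl 0) + ((∑ j, v (Sum.inr (Sum.inl (Sum.inr j)))) - v (Sum.inr (Sum.inl (Sum.inr i)))) := by
  rw [aux_sum_Vn]
  simp [specialGraph, graphJoin, SimpleGraph.sum, aux_sum_ite_ne]

lemma aux_nsum_c4 (v : (Fin 1 ⊕ ((Fin (n - 5) ⊕ Fin 3) ⊕ Fin 1)) → ℝ) :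
    ∑ u, (if (specialGraph n).Adj (Sum.inr (Sum.inr 0)) u then v u else 0)
      = v (Sum.inl 0) := by
  rw [aux_sum_Vn]
  simp [specialGraph, graphJoin, SimpleGraph.sum]

lemma aux_degree_eq_sum (w : (Fin 1 ⊕ ((Fin (n - 5) ⊕ Fin 3) ⊕ Fin 1))) :
    (((specialGraph n).degree w : ℝ)) = ∑ u, (if (specialGraph n).Adj w u then (1:ℝ) else 0) := by
  rw [SimpleGraph.degree, SimpleGraph.neighborFinset_eq_filter, Finset.card_filter]
  push_cast
  simp

lemma aux_cast_n5 (hn : 6 ≤ n) : ((n - 5 : ℕ) : ℝ) = (n : ℝ) - 5 := by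
  rw [Nat.cast_sub (by omega)]; norm_num

lemma aux_deg_a0 (hn : 6 ≤ n) :
    (((specialGraph n).degree (Sum.inl 0) : ℝ)) = (n : ℝ) - 1 := by
  rw [aux_degree_eq_sum, aux_nsum_a0]
  simp [Finset.sum_const, aux_cast_n5 hn]
  ring

lemma aux_deg_c2 (hn : 6 ≤ n) (i : Fin (n - 5)) :
    (((specialGraph n).degree (Sum.inr (Sum.inl (Sum.inl i))) : ℝ)) = (n : ℝ) - 5 := by
  rw [aux_degree_eq_sum, aux_nsum_c2]
  simp [Finset.sum_const, aux_cast_n5 hn]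

lemma aux_deg_c3 (i : Fin 3) :
    (((specialGraph n).degree (Sum.inr (Sum.inl (Sum.inr i))) : ℝ)) = 3 := by
  rw [aux_degree_eq_sum, aux_nsum_c3]
  simp [Finset.sum_const]

lemma aux_deg_c4 :
    (((specialGraph n).degree (Sum.inr (Sum.inr 0)) : ℝ)) = 1 := by
  rw [aux_degree_eq_sum, aux_nsum_c4]

/-- The `A_α` matrix of the special graph. -/
noncomputable def Mspec (n : ℕ) (a : ℝ) :
    Matrix (Fin 1 ⊕ ((Fin (n - 5) ⊕ Fin 3) ⊕ Fin 1))
      (Fin 1 ⊕ ((Fin (n - 5) ⊕ Fin 3) ⊕ Fin 1)) ℝ :=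
  a • Matrix.diagonal (fun v => ((specialGraph n).degree v : ℝ))
    + (1 - a) • (specialGraph n).adjMatrix ℝ

lemma aux_mulVec_expand (a : ℝ) (v : (Fin 1 ⊕ ((Fin (n - 5) ⊕ Fin 3) ⊕ Fin 1)) → ℝ)
    (w : (Fin 1 ⊕ ((Fin (n - 5) ⊕ Fin 3) ⊕ Fin 1))) :
    ((Mspec n a).mulVec v) w
    = a * ((specialGraph n).degree w : ℝ) * v w
      + (1 - a) * ∑ u, (if (specialGraph n).Adj w u then v u else 0) := by
  rw [Mspec, Matrix.add_mulVec, Matrix.smul_mulVec, Matrix.smul_mulVec]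
  simp only [Pi.add_apply, Pi.smul_apply, Matrix.mulVec_diagonal, smul_eq_mul]
  rw [SimpleGraph.adjMatrix_mulVec_apply, SimpleGraph.neighborFinset_eq_filter, Finset.sum_filter]
  ring

lemma aux_Mspec_a0 (hn : 6 ≤ n) (a : ℝ) (v : (Fin 1 ⊕ ((Fin (n - 5) ⊕ Fin 3) ⊕ Fin 1)) → ℝ) :
    ((Mspec n a).mulVec v) (Sum.inl 0)
      = a * ((n : ℝ) - 1) * v (Sum.inl 0)
        + (1 - a) * ((∑ i, v (Sum.inr (Sum.inl (Sum.inl i))))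
          + (∑ i, v (Sum.inr (Sum.inl (Sum.inr i)))) + v (Sum.inr (Sum.inr 0))) := by
  rw [aux_mulVec_expand, aux_deg_a0 hn, aux_nsum_a0]

lemma aux_Mspec_c2 (hn : 6 ≤ n) (a : ℝ) (i : Fin (n - 5))
    (v : (Fin 1 ⊕ ((Fin (n - 5) ⊕ Fin 3) ⊕ Fin 1)) → ℝ) :
    ((Mspec n a).mulVec v) (Sum.inr (Sum.inl (Sum.inl i)))
      = a * ((n : ℝ) - 5) * v (Sum.inr (Sum.inl (Sum.inl i)))
        + (1 - a) * (v (Sum.inl 0) + ((∑ j, v (Sum.inr (Sum.inl (Sum.inl j))))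
            - v (Sum.inr (Sum.inl (Sum.inl i))))) := by
  rw [aux_mulVec_expand, aux_deg_c2 hn, aux_nsum_c2]

lemma aux_Mspec_c3 (a : ℝ) (i : Fin 3)
    (v : (Fin 1 ⊕ ((Fin (n - 5) ⊕ Fin 3) ⊕ Fin 1)) → ℝ) :
    ((Mspec n a).mulVec v) (Sum.inr (Sum.inl (Sum.inr i)))
      = a * 3 * v (Sum.inr (Sum.inl (Sum.inr i)))
        + (1 - a) * (v (Sum.inl 0) + ((∑ j, v (Sum.inr (Sum.inl (Sum.inr j))))
            - v (Sum.inr (Sum.inl (Sum.inr i))))) := by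
  rw [aux_mulVec_expand, aux_deg_c3, aux_nsum_c3]

lemma aux_Mspec_c4 (a : ℝ) (v : (Fin 1 ⊕ ((Fin (n - 5) ⊕ Fin 3) ⊕ Fin 1)) → ℝ) :
    ((Mspec n a).mulVec v) (Sum.inr (Sum.inr 0))
      = a * 1 * v (Sum.inr (Sum.inr 0)) + (1 - a) * v (Sum.inl 0) := by
  rw [aux_mulVec_expand, aux_deg_c4, aux_nsum_c4]

lemma aux_Mspec_isHermitian (a : ℝ) : (Mspec n a).IsHermitian := by
  show Matrix.conjTranspose (Mspec n a) = Mspec n a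
  ext i j
  simp only [Matrix.conjTranspose_apply, star_trivial, Mspec, Matrix.add_apply, Matrix.smul_apply,
    SimpleGraph.adjMatrix_apply, smul_eq_mul]
  by_cases h : i = j
  · subst h; rfl
  · rw [Matrix.diagonal_apply_ne _ h, Matrix.diagonal_apply_ne _ (Ne.symm h),
      SimpleGraph.adj_comm]

end GraphSums

section MainAux

variable {n : ℕ}

lemma aux_Bq_mulVec (a r : ℝ) (y : Fin 4 → ℝ) :
    (Bq a r).mulVec y 0 = a*(r-1) * y 0 + (1-a)*(r-5) * y 1 + 3*(1-a) * y 2 + (1-a) * y 3 ∧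
    (Bq a r).mulVec y 1 = (1-a) * y 0 + (a*(r-5)+(1-a)*(r-6)) * y 1 ∧
    (Bq a r).mulVec y 2 = (1-a) * y 0 + (3*a+2*(1-a)) * y 2 ∧
    (Bq a r).mulVec y 3 = (1-a) * y 0 + a * y 3 := by
  refine ⟨?_, ?_, ?_, ?_⟩ <;>
    · rw [aux_mulVec4]
      simp [Bq, Matrix.vecHead, Matrix.vecTail]
      try ring

lemma aux_Btq_mulVec (a r : ℝ) (y : Fin 4 → ℝ) :
    (Btq a r).mulVec y 0 = a*(r-1) * y 0 + (1-a) * y 1 + (1-a) * y 2 + (1-a) * y 3 ∧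
    (Btq a r).mulVec y 1 = (1-a)*(r-5) * y 0 + (a*(r-5)+(1-a)*(r-6)) * y 1 ∧
    (Btq a r).mulVec y 2 = 3*(1-a) * y 0 + (3*a+2*(1-a)) * y 2 ∧
    (Btq a r).mulVec y 3 = (1-a) * y 0 + a * y 3 := by
  refine ⟨?_, ?_, ?_, ?_⟩ <;>
    · rw [aux_mulVec4]
      simp [Btq, Matrix.vecHead, Matrix.vecTail]
      try ring

lemma aux_sum_affine {ι : Type*} [Fintype ι] (f : ι → ℝ) (c d : ℝ) :
    ∑ i, (c * f i + d) = c * (∑ i, f i) + (Fintype.card ι : ℝ) * d := by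
  rw [Finset.sum_add_distrib, ← Finset.mul_sum, Finset.sum_const, nsmul_eq_mul,
    Finset.card_univ]

/-- Every real root of the quartic is a root of the characteristic polynomial. -/
lemma aux_lift_root (hn : 6 ≤ n) (a r : ℝ) (hr : phiP a (n : ℝ) r = 0) :
    (Matrix.charpoly (Mspec n a)).IsRoot r := by
  rw [aux_charpoly_isRoot_iff]
  have hdet : Matrix.det (r • (1 : Matrix (Fin 4) (Fin 4) ℝ) - Bq a (n:ℝ)) = 0 := by
    rw [aux_detBq]; exact hr
  obtain ⟨y, hy0, hy⟩ := (Matrix.exists_mulVec_eq_zero_iff).mpr hdet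
  have hy' : (Bq a (n:ℝ)).mulVec y = r • y := by
    rw [Matrix.sub_mulVec, Matrix.smul_mulVec, Matrix.one_mulVec, sub_eq_zero] at hy
    exact hy.symm
  obtain ⟨c0, c1, c2, c3⟩ := aux_Bq_mulVec a (n:ℝ) y
  have e0 := congrFun hy' 0; rw [c0] at e0
  have e1 := congrFun hy' 1; rw [c1] at e1
  have e2 := congrFun hy' 2; rw [c2] at e2
  have e3 := congrFun hy' 3; rw [c3] at e3
  simp only [Pi.smul_apply, smul_eq_mul] at e0 e1 e2 e3
  refine ⟨Sum.elim (fun _ => y 0)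
    (Sum.elim (Sum.elim (fun _ => y 1) (fun _ => y 2)) (fun _ => y 3)), ?_, ?_⟩
  · intro hv0
    apply hy0
    funext k
    have h0 := congrFun hv0 (Sum.inl 0)
    have h1 := congrFun hv0 (Sum.inr (Sum.inl (Sum.inl ⟨0, by omega⟩)))
    have h2 := congrFun hv0 (Sum.inr (Sum.inl (Sum.inr 0)))
    have h3 := congrFun hv0 (Sum.inr (Sum.inr 0))
    simp only [Sum.elim_inl, Sum.elim_inr, Pi.zero_apply] at h0 h1 h2 h3
    fin_cases k <;> assumption
  · have hs1 : (∑ _i : Fin (n-5), y 1) = ((n:ℝ) - 5) * y 1 := by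
      rw [Finset.sum_const, nsmul_eq_mul, Finset.card_univ, Fintype.card_fin, aux_cast_n5 hn]
    have hs2 : (∑ _i : Fin 3, y 2) = 3 * y 2 := by
      rw [Finset.sum_const, nsmul_eq_mul, Finset.card_univ, Fintype.card_fin]
      norm_num
    funext w
    rcases w with w0 | w'
    · obtain rfl : w0 = 0 := Subsingleton.elim _ _
      rw [aux_Mspec_a0 hn]
      simp only [Sum.elim_inl, Sum.elim_inr, Pi.smul_apply, smul_eq_mul, hs1, hs2]
      linear_combination e0
    · rcases w' with w'' | w1
      · rcases w'' with i | i
        · rw [aux_Mspec_c2 hn]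
          simp only [Sum.elim_inl, Sum.elim_inr, Pi.smul_apply, smul_eq_mul, hs1, hs2]
          linear_combination e1
        · rw [aux_Mspec_c3]
          simp only [Sum.elim_inl, Sum.elim_inr, Pi.smul_apply, smul_eq_mul, hs1, hs2]
          linear_combination e2
      · obtain rfl : w1 = 0 := Subsingleton.elim _ _
        rw [aux_Mspec_c4]
        simp only [Sum.elim_inl, Sum.elim_inr, Pi.smul_apply, smul_eq_mul]
        linear_combination e3

/-- `4a - 1` is always an eigenvalue (via a difference vector inside the triangle). -/
lemma aux_b_mem (hn : 6 ≤ n) (a : ℝ) :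
    (Matrix.charpoly (Mspec n a)).IsRoot (4*a - 1) := by
  rw [aux_charpoly_isRoot_iff]
  refine ⟨Sum.elim (fun _ => 0)
    (Sum.elim (Sum.elim (fun _ => 0)
      (fun i => if i = 0 then (1:ℝ) else if i = 1 then -1 else 0)) (fun _ => 0)), ?_, ?_⟩
  · intro hv0
    have h := congrFun hv0 (Sum.inr (Sum.inl (Sum.inr 0)))
    simp at h
  · have hs2 : (∑ j : Fin 3, (if j = 0 then (1:ℝ) else if j = 1 then -1 else 0)) = 0 := by
      rw [Fin.sum_univ_three]
      simp
    funext w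
    rcases w with w0 | w'
    · obtain rfl : w0 = 0 := Subsingleton.elim _ _
      rw [aux_Mspec_a0 hn]
      simp [hs2]
    · rcases w' with w'' | w1
      · rcases w'' with i | i
        · rw [aux_Mspec_c2 hn]
          simp [hs2]
        · rw [aux_Mspec_c3]
          simp only [Sum.elim_inl, Sum.elim_inr, Pi.smul_apply, smul_eq_mul, hs2]
          ring
      · obtain rfl : w1 = 0 := Subsingleton.elim _ _
        rw [aux_Mspec_c4]
        simp

end MainAux

/-- For `α ∈ [0,1)` and an integer `n ≥ 6`, `ρ_α(K_1 ∨ (K_{n-5} ∪ K_3 ∪ K_1))` is the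
largest real root of the quartic
`φ(x) = x⁴ - ((1+α)n + 2α - 4)x³ + (αn² + (2α² - α + 1)n + α² - 6α - 11)x²
 - ((2α² + 2α)n² + (α³ - 11α² - 2α - 6)n + 32α² - 62α + 32)x
 + (α³ + 2α²)n² - (9α³ + 5α² + 2α + 2)n + 34α³ - 39α² + 8α + 12`. -/
theorem rhoAlpha_specialGraph_is_largest_root
    (α : ℝ) (hα0 : 0 ≤ α) (hα1 : α < 1) (n : ℕ) (hn : 6 ≤ n)
    (φ : ℝ → ℝ)
    (hφ : ∀ x : ℝ, φ x =
      x ^ 4 - ((1 + α) * n + 2 * α - 4) * x ^ 3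
      + (α * n ^ 2 + (2 * α ^ 2 - α + 1) * n + α ^ 2 - 6 * α - 11) * x ^ 2
      - ((2 * α ^ 2 + 2 * α) * n ^ 2 + (α ^ 3 - 11 * α ^ 2 - 2 * α - 6) * n
          + 32 * α ^ 2 - 62 * α + 32) * x
      + (α ^ 3 + 2 * α ^ 2) * n ^ 2 - (9 * α ^ 3 + 5 * α ^ 2 + 2 * α + 2) * n
          + 34 * α ^ 3 - 39 * α ^ 2 + 8 * α + 12) :
    φ (rhoAlpha α (specialGraph n)) = 0 ∧
      ∀ x : ℝ, φ x = 0 → x ≤ rhoAlpha α (specialGraph n) := by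
  have hn6 : (6:ℝ) ≤ (n:ℝ) := by exact_mod_cast hn
  have hphi : ∀ x : ℝ, φ x = phiP α (n:ℝ) x := by
    intro x; rw [hφ x]; rfl
  have hrho : rhoAlpha α (specialGraph n) =
      sSup {μ : ℝ | (Matrix.charpoly (Mspec n α)).IsRoot μ} := rfl
  set S := {μ : ℝ | (Matrix.charpoly (Mspec n α)).IsRoot μ} with hSdef
  have hfin : S.Finite := Polynomial.finite_setOf_isRoot (Matrix.charpoly_monic _).ne_zero
  have hbdd : BddAbove S := hfin.bddAbove
  have hne : S.Nonempty := ⟨4*α - 1, aux_b_mem hn α⟩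
  have hmem : sSup S ∈ S := hne.csSup_mem hfin
  have hray : α * ((n:ℝ) - 1) ≤ sSup S := by
    have h1 := aux_diag_le_csSup_roots (Mspec n α) (aux_Mspec_isHermitian α) (Sum.inl 0)
    have h2 : (Mspec n α) (Sum.inl 0) (Sum.inl 0) = α * ((n:ℝ) - 1) := by
      have hd := aux_deg_a0 (n := n) hn
      simp only [Mspec, Matrix.add_apply, Matrix.smul_apply, Matrix.diagonal_apply_eq,
        SimpleGraph.adjMatrix_apply, smul_eq_mul, hd]
      simp [SimpleGraph.irrefl]
    rwa [h2] at h1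
  constructor
  · -- first part
    rw [hrho, hphi]
    obtain ⟨v, hv0, hv⟩ := (aux_charpoly_isRoot_iff _ _).mp hmem
    have hcard2 : ((Fintype.card (Fin (n-5)) : ℕ) : ℝ) = (n:ℝ) - 5 := by
      rw [Fintype.card_fin]; exact aux_cast_n5 hn
    have hcard3 : ((Fintype.card (Fin 3) : ℕ) : ℝ) = 3 := by norm_num
    -- the four summed (quotient) equations
    have E0 : α * ((n:ℝ)-1) * v (Sum.inl 0)
        + (1-α)*((∑ i, v (Sum.inr (Sum.inl (Sum.inl i))))
          + (∑ i, v (Sum.inr (Sum.inl (Sum.inr i)))) + v (Sum.inr (Sum.inr 0)))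
        = sSup S * v (Sum.inl 0) := by
      have h := congrFun hv (Sum.inl 0)
      rw [aux_Mspec_a0 hn] at h
      simpa using h
    have E1 : (α*((n:ℝ)-5) - (1-α)) * (∑ i, v (Sum.inr (Sum.inl (Sum.inl i))))
        + ((n:ℝ)-5) * ((1-α)*(v (Sum.inl 0) + ∑ j, v (Sum.inr (Sum.inl (Sum.inl j)))))
        = sSup S * (∑ i, v (Sum.inr (Sum.inl (Sum.inl i)))) := by
      have hpt : ∀ i : Fin (n-5), ((Mspec n α).mulVec v) (Sum.inr (Sum.inl (Sum.inl i)))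
          = (α*((n:ℝ)-5) - (1-α)) * v (Sum.inr (Sum.inl (Sum.inl i)))
            + (1-α)*(v (Sum.inl 0) + ∑ j, v (Sum.inr (Sum.inl (Sum.inl j)))) := by
        intro i; rw [aux_Mspec_c2 hn]; ring
      have hsum : ∑ i : Fin (n-5), ((Mspec n α).mulVec v) (Sum.inr (Sum.inl (Sum.inl i)))
          = ∑ i : Fin (n-5), sSup S * v (Sum.inr (Sum.inl (Sum.inl i))) := by
        refine Finset.sum_congr rfl fun i _ => ?_
        rw [congrFun hv (Sum.inr (Sum.inl (Sum.inl i)))]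
        simp
      rw [Finset.sum_congr rfl (fun i _ => hpt i), aux_sum_affine, hcard2,
        ← Finset.mul_sum] at hsum
      exact hsum
    have E2 : (α*3 - (1-α)) * (∑ i, v (Sum.inr (Sum.inl (Sum.inr i))))
        + 3 * ((1-α)*(v (Sum.inl 0) + ∑ j, v (Sum.inr (Sum.inl (Sum.inr j)))))
        = sSup S * (∑ i, v (Sum.inr (Sum.inl (Sum.inr i)))) := by
      have hpt : ∀ i : Fin 3, ((Mspec n α).mulVec v) (Sum.inr (Sum.inl (Sum.inr i)))
          = (α*3 - (1-α)) * v (Sum.inr (Sum.inl (Sum.inr i)))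
            + (1-α)*(v (Sum.inl 0) + ∑ j, v (Sum.inr (Sum.inl (Sum.inr j)))) := by
        intro i; rw [aux_Mspec_c3]; ring
      have hsum : ∑ i : Fin 3, ((Mspec n α).mulVec v) (Sum.inr (Sum.inl (Sum.inr i)))
          = ∑ i : Fin 3, sSup S * v (Sum.inr (Sum.inl (Sum.inr i))) := by
        refine Finset.sum_congr rfl fun i _ => ?_
        rw [congrFun hv (Sum.inr (Sum.inl (Sum.inr i)))]
        simp
      rw [Finset.sum_congr rfl (fun i _ => hpt i), aux_sum_affine, hcard3,
        ← Finset.mul_sum] at hsum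
      exact hsum
    have E3 : α * 1 * v (Sum.inr (Sum.inr 0)) + (1-α) * v (Sum.inl 0)
        = sSup S * v (Sum.inr (Sum.inr 0)) := by
      have h := congrFun hv (Sum.inr (Sum.inr 0))
      rw [aux_Mspec_c4] at h
      simpa using h
    by_cases hz : v (Sum.inl 0) = 0 ∧ (∑ i, v (Sum.inr (Sum.inl (Sum.inl i)))) = 0
        ∧ (∑ i, v (Sum.inr (Sum.inl (Sum.inr i)))) = 0 ∧ v (Sum.inr (Sum.inr 0)) = 0
    · -- all class sums vanish : contradiction with Rayleigh bound
      exfalso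
      obtain ⟨z0, z1, z2, z3⟩ := hz
      obtain ⟨w, hw⟩ := Function.ne_iff.mp hv0
      rcases w with w0 | w'
      · obtain rfl : w0 = 0 := Subsingleton.elim _ _
        exact hw z0
      · rcases w' with w'' | w1
        · rcases w'' with i | i
          · have h := congrFun hv (Sum.inr (Sum.inl (Sum.inl i)))
            rw [aux_Mspec_c2 hn] at h
            simp only [z0, z1, Pi.smul_apply, smul_eq_mul] at h
            have hfac : (sSup S - (α*((n:ℝ)-5) - (1-α))) * v (Sum.inr (Sum.inl (Sum.inl i))) = 0 := by
              linear_combination -h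
            rcases mul_eq_zero.mp hfac with h1 | h2
            · rw [sub_eq_zero] at h1
              have hx : α*((n:ℝ)-1) - (α*((n:ℝ)-5) - (1-α)) = 3*α + 1 := by ring
              linarith
            · exact hw h2
          · have h := congrFun hv (Sum.inr (Sum.inl (Sum.inr i)))
            rw [aux_Mspec_c3] at h
            simp only [z0, z2, Pi.smul_apply, smul_eq_mul] at h
            have hfac : (sSup S - (4*α - 1)) * v (Sum.inr (Sum.inl (Sum.inr i))) = 0 := by
              linear_combination -h
            rcases mul_eq_zero.mp hfac with h1 | h2
            · rw [sub_eq_zero] at h1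
              have hpos : 0 ≤ α*((n:ℝ)-5) := mul_nonneg hα0 (by linarith)
              have hx : α*((n:ℝ)-1) - (4*α - 1) = α*((n:ℝ)-5) + 1 := by ring
              linarith
            · exact hw h2
        · obtain rfl : w1 = 0 := Subsingleton.elim _ _
          exact hw z3
    · -- the class-sum vector is a nonzero eigenvector of the quotient matrix
      set Y : Fin 4 → ℝ := ![v (Sum.inl 0), ∑ i, v (Sum.inr (Sum.inl (Sum.inl i))),
        ∑ i, v (Sum.inr (Sum.inl (Sum.inr i))), v (Sum.inr (Sum.inr 0))] with hYdef
      have hY0 : Y 0 = v (Sum.inl 0) := rfl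
      have hY1 : Y 1 = ∑ i, v (Sum.inr (Sum.inl (Sum.inl i))) := rfl
      have hY2 : Y 2 = ∑ i, v (Sum.inr (Sum.inl (Sum.inr i))) := rfl
      have hY3 : Y 3 = v (Sum.inr (Sum.inr 0)) := rfl
      have hYne : Y ≠ 0 := by
        intro h
        exact hz ⟨congrFun h 0, congrFun h 1, congrFun h 2, congrFun h 3⟩
      have hBY : (Btq α (n:ℝ)).mulVec Y = sSup S • Y := by
        obtain ⟨c0, c1, c2, c3⟩ := aux_Btq_mulVec α (n:ℝ) Y
        funext k
        fin_cases k
        · show (Btq α (n:ℝ)).mulVec Y 0 = (sSup S • Y) 0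
          rw [c0]
          simp only [Pi.smul_apply, smul_eq_mul, hY0, hY1, hY2, hY3]
          linear_combination E0
        · show (Btq α (n:ℝ)).mulVec Y 1 = (sSup S • Y) 1
          rw [c1]
          simp only [Pi.smul_apply, smul_eq_mul, hY0, hY1, hY2, hY3]
          linear_combination E1
        · show (Btq α (n:ℝ)).mulVec Y 2 = (sSup S • Y) 2
          rw [c2]
          simp only [Pi.smul_apply, smul_eq_mul, hY0, hY1, hY2, hY3]
          linear_combination E2
        · show (Btq α (n:ℝ)).mulVec Y 3 = (sSup S • Y) 3
          rw [c3]
          simp only [Pi.smul_apply, smul_eq_mul, hY0, hY1, hY2, hY3]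
          linear_combination E3
      have hker : (sSup S • (1 : Matrix (Fin 4) (Fin 4) ℝ) - Btq α (n:ℝ)).mulVec Y = 0 := by
        rw [Matrix.sub_mulVec, Matrix.smul_mulVec, Matrix.one_mulVec, hBY, sub_self]
      have hdet0 := Matrix.exists_mulVec_eq_zero_iff.mp ⟨Y, hYne, hker⟩
      rw [aux_detBtq] at hdet0
      exact hdet0
  · intro x hx
    rw [hrho]
    exact le_csSup hbdd (aux_lift_root hn α x (by rw [← hphi]; exact hx))
end

section
/- Let α ∈ [0,1], let s ≥ 1 be an integer and let n be an integer with n ≥ 2s + 6. Let M be the real symmetric 4×4 matrix with rows (αn − αs + s − 1, (1−α)√(s(n−2s−3)), (1−α)√(3s), (1−α)s), ((1−α)√(s(n−2s−3)), n + αs − 2s − 4, 0, 0), ((1−α)√(3s), 0, αs + 2, 0), ((1−α)s, 0, 0, αs). Then the second largest eigenvalue of M is at most n + αs − 2s − 4. -/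
/-- Let `α ∈ [0,1]`, `s ≥ 1` and `n ≥ 2s + 6` be integers, and let `M` be the symmetric
matrix `Q^{1/2} B₂ Q^{-1/2}` obtained from the quotient matrix `B₂` of
`A_α(K_s ∨ (K_{n-2s-3} ∪ K_3 ∪ sK_1))`.  Then the second largest eigenvalue of `M`
(the eigenvalues being listed in nonincreasing order, with multiplicity) is at most
`n + αs - 2s - 4`.  Here the eigenvalues are sorted in nondecreasing order by
`Tuple.sort`, so the second largest one has index `2` in `Fin 4`. -/
theorem second_eigenvalue_le
    (α : ℝ) (hα0 : 0 ≤ α) (hα1 : α ≤ 1) (s n : ℕ) (hs : 1 ≤ s) (hn : 2 * s + 6 ≤ n)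
    (M : Matrix (Fin 4) (Fin 4) ℝ)
    (hM : M =
      !![α * n - α * s + s - 1, (1 - α) * Real.sqrt (s * ((n : ℝ) - 2 * s - 3)),
          (1 - α) * Real.sqrt (3 * s), (1 - α) * s;
        (1 - α) * Real.sqrt (s * ((n : ℝ) - 2 * s - 3)), (n : ℝ) + α * s - 2 * s - 4, 0, 0;
        (1 - α) * Real.sqrt (3 * s), 0, α * s + 2, 0;
        (1 - α) * s, 0, 0, α * s])
    (hHerm : M.IsHermitian) :
    hHerm.eigenvalues (Tuple.sort hHerm.eigenvalues 2) ≤ (n : ℝ) + α * s - 2 * s - 4 := by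
  set β : ℝ := (n : ℝ) + α * s - 2 * s - 4 with hβ
  have hns : (2 * s + 6 : ℝ) ≤ (n : ℝ) := by exact_mod_cast hn
  have hs' : (1 : ℝ) ≤ (s : ℝ) := by exact_mod_cast hs
  have hβ2 : α * s + 2 ≤ β := by linarith
  have hβ0 : α * s ≤ β := by nlinarith
  -- quadratic form bound for vectors with first coordinate zero
  have QF : ∀ x : Fin 4 → ℝ, x 0 = 0 →
      ∑ k, x k * (M.mulVec x) k ≤ β * ∑ k, x k * x k := by
    intro x hx0
    subst hM
    simp only [Matrix.mulVec, dotProduct, Fin.sum_univ_four, hx0]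
    simp [Matrix.cons_val_zero, Matrix.cons_val_one, Matrix.cons_val_two, Matrix.cons_val_three, Matrix.head_cons, Matrix.tail_cons, Matrix.vecHead, Matrix.vecTail, Function.comp]
    nlinarith [sq_nonneg (x 1), sq_nonneg (x 2), sq_nonneg (x 3)]
  by_contra hcon
  push_neg at hcon
  set i : Fin 4 := Tuple.sort hHerm.eigenvalues 2 with hi
  set j : Fin 4 := Tuple.sort hHerm.eigenvalues 3 with hj
  have hij : i ≠ j := fun h => by
    have := (Tuple.sort hHerm.eigenvalues).injective h
    exact absurd this (by decide)
  have hle : hHerm.eigenvalues i ≤ hHerm.eigenvalues j :=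
    Tuple.monotone_sort hHerm.eigenvalues (show (2 : Fin 4) ≤ 3 by decide)
  set lami := hHerm.eigenvalues i
  set lamj := hHerm.eigenvalues j
  have hlami : β < lami := hcon
  have hlamj : β < lamj := lt_of_lt_of_le hlami hle
  set u : Fin 4 → ℝ := ⇑(hHerm.eigenvectorBasis i) with hudef
  set v : Fin 4 → ℝ := ⇑(hHerm.eigenvectorBasis j) with hvdef
  have hu : M.mulVec u = lami • u := hHerm.mulVec_eigenvectorBasis i
  have hv : M.mulVec v = lamj • v := hHerm.mulVec_eigenvectorBasis j
  have horth := hHerm.eigenvectorBasis.orthonormal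
  have hA : ∑ k, u k * u k = 1 := by
    have h1 := orthonormal_iff_ite.mp horth i i
    simp only [PiLp.inner_apply, RCLike.inner_apply, conj_trivial, if_pos rfl, if_true] at h1
    rw [← h1, hudef]
  have hB : ∑ k, v k * v k = 1 := by
    have h1 := orthonormal_iff_ite.mp horth j j
    simp only [PiLp.inner_apply, RCLike.inner_apply, conj_trivial, if_pos rfl, if_true] at h1
    rw [← h1, hvdef]
  have hC : ∑ k, u k * v k = 0 := by
    have h1 := orthonormal_iff_ite.mp horth i j
    simp only [PiLp.inner_apply, RCLike.inner_apply, conj_trivial, if_neg hij] at h1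
    rw [← h1, hudef, hvdef]; exact Finset.sum_congr rfl (fun k _ => by ring)
  set a := u 0 with ha
  set b := v 0 with hb
  -- first vector: x = b • u - a • v, has x 0 = 0
  have key : b ^ 2 * lami + a ^ 2 * lamj ≤ β * (b ^ 2 + a ^ 2) := by
    set x : Fin 4 → ℝ := fun k => b * u k - a * v k with hx
    have hx0 : x 0 = 0 := by simp [hx, ha, hb]; ring
    have hQF := QF x hx0
    have hMx : ∀ k, (M.mulVec x) k = b * (lami * u k) - a * (lamj * v k) := by
      intro k
      have : M.mulVec x = b • (M.mulVec u) - a • (M.mulVec v) := by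
        have : x = b • u - a • v := by funext k; simp [hx]
        rw [this, Matrix.mulVec_sub, Matrix.mulVec_smul, Matrix.mulVec_smul]
      rw [this, hu, hv]; simp only [Pi.sub_apply, Pi.smul_apply, smul_eq_mul]
    have hL : ∑ k, x k * (M.mulVec x) k = b ^ 2 * lami + a ^ 2 * lamj := by
      simp only [hMx]
      simp only [hx]
      simp only [Fin.sum_univ_four] at hA hB hC ⊢
      linear_combination (b^2*lami) * hA + (a^2*lamj) * hB - (a*b*(lami+lamj)) * hC
    have hR : ∑ k, x k * x k = b ^ 2 + a ^ 2 := by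
      simp only [hx]
      simp only [Fin.sum_univ_four] at hA hB hC ⊢
      linear_combination (b^2) * hA + (a^2) * hB - (2*a*b) * hC
    rw [hL, hR] at hQF
    exact hQF
  have ha2 : a ^ 2 ≤ 0 := by nlinarith [sq_nonneg a, sq_nonneg b]
  have ha0 : a = 0 := by
    have : a ^ 2 = 0 := le_antisymm ha2 (sq_nonneg a)
    exact pow_eq_zero_iff two_ne_zero |>.mp this
  -- second: apply QF to u itself
  have hQFu := QF u (by rw [← ha, ha0])
  have hLu : ∑ k, u k * (M.mulVec u) k = lami := by
    rw [hu]
    simp only [Pi.smul_apply, smul_eq_mul]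
    calc ∑ k, u k * (lami * u k) = lami * ∑ k, u k * u k := by
          rw [Finset.mul_sum]; congr 1; funext k; ring
      _ = lami := by rw [hA, mul_one]
  rw [hLu, hA, mul_one] at hQFu
  linarith
end

section
/- Let α ∈ [0,1), let s ≥ 1 and q ≥ 2 be integers, and let n_1, …, n_q be positive integers with total sum n − s. If i ≠ j and n_i ≥ n_j, then ρ_α(K_s ∨ (K_{n_1} ∪ ⋯ ∪ K_{n_i} ∪ ⋯ ∪ K_{n_j} ∪ ⋯ ∪ K_{n_q})) < ρ_α(K_s ∨ (K_{n_1} ∪ ⋯ ∪ K_{n_i + 1} ∪ ⋯ ∪ K_{n_j − 1} ∪ ⋯ ∪ K_{n_q})), where in the second graph the i-th complete block has n_i + 1 vertices and the j-th has n_j − 1 vertices and all other blocks are unchanged. -/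
open scoped Classical

/-- The disjoint union `K_{m 0} ∪ K_{m 1} ∪ ⋯ ∪ K_{m (q-1)}` of complete graphs:
two vertices are adjacent iff they are distinct and lie in the same block. -/
def cliquesUnion {q : ℕ} (m : Fin q → ℕ) : SimpleGraph (Σ k : Fin q, Fin (m k)) where
  Adj x y := x.1 = y.1 ∧ x ≠ y
  symm := ⟨by rintro x y ⟨h1, h2⟩; exact ⟨h1.symm, h2.symm⟩⟩
  loopless := ⟨by rintro x ⟨h1, h2⟩; exact h2 rfl⟩

set_option linter.unusedSectionVars false
set_option maxHeartbeats 2000000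
open Matrix Polynomial Finset
open Matrix Polynomial

section general
variable {V : Type*} [Fintype V] [DecidableEq V]

lemma eval_charpoly' (M : Matrix V V ℝ) (μ : ℝ) :
    (M.charpoly).eval μ = (μ • (1 : Matrix V V ℝ) - M).det := by
  rw [Matrix.charpoly, ← Polynomial.coe_evalRingHom, RingHom.map_det]
  congr 1
  ext i j
  by_cases h : i = j <;>
    simp [h, charmatrix_apply, Matrix.one_apply, Matrix.diagonal_apply, Matrix.smul_apply]

lemma isRoot_charpoly_iff (M : Matrix V V ℝ) (μ : ℝ) :
    M.charpoly.IsRoot μ ↔ ∃ v ≠ 0, M *ᵥ v = μ • v := by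
  rw [Polynomial.IsRoot, eval_charpoly', ← Matrix.exists_mulVec_eq_zero_iff]
  refine exists_congr fun v => and_congr_right fun hv => ?_
  rw [Matrix.sub_mulVec, sub_eq_zero, Matrix.smul_mulVec, Matrix.one_mulVec, eq_comm]

lemma roots_finite (M : Matrix V V ℝ) : {μ : ℝ | M.charpoly.IsRoot μ}.Finite :=
  Polynomial.finite_setOf_isRoot (M.charpoly_monic).ne_zero

noncomputable def lamMax (M : Matrix V V ℝ) : ℝ := sSup {μ : ℝ | M.charpoly.IsRoot μ}

variable [Nonempty V] {M : Matrix V V ℝ}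

lemma eig_isRoot (hM : M.IsHermitian) (i : V) : M.charpoly.IsRoot (hM.eigenvalues i) := by
  rw [isRoot_charpoly_iff]
  refine ⟨⇑(hM.eigenvectorBasis i), ?_, ?_⟩
  · intro h
    refine hM.eigenvectorBasis.toBasis.ne_zero i ?_
    ext x
    simpa using congrFun h x
  · simpa using hM.mulVec_eigenvectorBasis i

lemma le_lamMax {μ : ℝ} (h : M.charpoly.IsRoot μ) : μ ≤ lamMax M :=
  le_csSup (roots_finite M).bddAbove h

lemma lamMax_isRoot (hM : M.IsHermitian) : M.charpoly.IsRoot (lamMax M) :=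
  Set.Nonempty.csSup_mem
    ⟨hM.eigenvalues (Classical.arbitrary V),
      Set.mem_setOf_eq ▸ eig_isRoot hM (Classical.arbitrary V)⟩
    (roots_finite M)

lemma rayleigh_le (hM : M.IsHermitian) (x : V → ℝ) :
    x ⬝ᵥ M *ᵥ x ≤ lamMax M * (x ⬝ᵥ x) := by
  have hle : ∀ i : V, hM.eigenvalues i ≤ lamMax M := fun i => le_lamMax (eig_isRoot hM i)
  have hsp := hM.spectral_theorem
  set U : Matrix V V ℝ := (hM.eigenvectorUnitary : Matrix V V ℝ) with hU
  set D : Matrix V V ℝ := Matrix.diagonal (RCLike.ofReal ∘ hM.eigenvalues) with hD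
  have hUU : U * star U = 1 := Unitary.coe_mul_star_self hM.eigenvectorUnitary
  set z : V → ℝ := star U *ᵥ x with hz
  have hdot : ∀ w : V → ℝ, x ⬝ᵥ (U *ᵥ w) = z ⬝ᵥ w := by
    intro w
    rw [Matrix.dotProduct_mulVec, hz]
    congr 1
    rw [Matrix.star_eq_conjTranspose, Matrix.conjTranspose_eq_transpose_of_trivial,
      Matrix.mulVec_transpose]
  have h1 : x ⬝ᵥ M *ᵥ x = z ⬝ᵥ D *ᵥ z := by
    conv_lhs => rw [hsp, Unitary.conjStarAlgAut_apply, ← hU]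
    rw [← Matrix.mulVec_mulVec, ← Matrix.mulVec_mulVec, hdot]
  have h2 : z ⬝ᵥ z = x ⬝ᵥ x := by
    have : z ⬝ᵥ z = x ⬝ᵥ (U *ᵥ (star U *ᵥ x)) := (hdot _).symm
    rw [Matrix.mulVec_mulVec, hUU, Matrix.one_mulVec] at this
    rw [this]
  have h3 : z ⬝ᵥ D *ᵥ z ≤ lamMax M * (z ⬝ᵥ z) := by
    rw [hD]
    simp only [dotProduct, Matrix.mulVec_diagonal, Function.comp_apply,
      RCLike.ofReal_real_eq_id, id_eq]
    rw [Finset.mul_sum]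
    refine Finset.sum_le_sum fun i _ => ?_
    have : z i * (hM.eigenvalues i * z i) = hM.eigenvalues i * (z i * z i) := by ring
    rw [this]
    exact mul_le_mul_of_nonneg_right (hle i) (mul_self_nonneg _)
  calc x ⬝ᵥ M *ᵥ x = z ⬝ᵥ D *ᵥ z := h1
    _ ≤ lamMax M * (z ⬝ᵥ z) := h3
    _ = lamMax M * (x ⬝ᵥ x) := by rw [h2]

lemma diag_le_lamMax (hM : M.IsHermitian) (u : V) : M u u ≤ lamMax M := by
  have := rayleigh_le hM (Pi.single u 1)
  simpa [dotProduct, Matrix.mulVec, Pi.single_apply, Finset.sum_ite_eq,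
    Finset.sum_ite_eq'] using this

lemma psd_shift (hM : M.IsHermitian) : (lamMax M • (1 : Matrix V V ℝ) - M).PosSemidef := by
  refine Matrix.PosSemidef.of_dotProduct_mulVec_nonneg ?_ ?_
  · have h1 : (lamMax M • (1 : Matrix V V ℝ)).IsHermitian := by
      simp [Matrix.IsHermitian]
    exact h1.sub hM
  · intro x
    have h := rayleigh_le hM x
    have : star x ⬝ᵥ (lamMax M • (1 : Matrix V V ℝ) - M) *ᵥ x
        = lamMax M * (x ⬝ᵥ x) - x ⬝ᵥ M *ᵥ x := by
      rw [star_trivial, Matrix.sub_mulVec, dotProduct_sub,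
        Matrix.smul_mulVec, Matrix.one_mulVec, dotProduct_smul]
      simp [smul_eq_mul]
    rw [this]
    linarith

/-- a nonnegative eigenvector for the top eigenvalue of a symmetric matrix with
nonnegative entries -/
lemma exists_nonneg_eigenvector (hM : M.IsHermitian) (hnn : ∀ u v, 0 ≤ M u v) :
    ∃ y : V → ℝ, y ≠ 0 ∧ (∀ u, 0 ≤ y u) ∧ M *ᵥ y = lamMax M • y := by
  obtain ⟨x, hx0, hx⟩ := (isRoot_charpoly_iff M (lamMax M)).1 (lamMax_isRoot hM)
  refine ⟨fun u => |x u|, ?_, fun u => abs_nonneg _, ?_⟩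
  · intro h
    apply hx0
    ext u
    have := congrFun h u
    simpa using abs_eq_zero.1 this
  · set y : V → ℝ := fun u => |x u| with hy
    have hyy : y ⬝ᵥ y = x ⬝ᵥ x := by
      simp only [dotProduct, hy, abs_mul_abs_self]
    have hxMx : x ⬝ᵥ M *ᵥ x = lamMax M * (x ⬝ᵥ x) := by
      rw [hx, dotProduct_smul, smul_eq_mul]
    have hyMy : x ⬝ᵥ M *ᵥ x ≤ y ⬝ᵥ M *ᵥ y := by
      simp only [dotProduct, Matrix.mulVec]
      refine Finset.sum_le_sum fun u _ => ?_
      rw [Finset.mul_sum, Finset.mul_sum]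
      refine Finset.sum_le_sum fun v _ => ?_
      have h1 : x u * (M u v * x v) ≤ |x u * (M u v * x v)| := le_abs_self _
      have h2 : |x u * (M u v * x v)| = y u * (M u v * y v) := by
        rw [abs_mul, abs_mul, abs_of_nonneg (hnn u v)]
      linarith
    have hz : y ⬝ᵥ (lamMax M • (1 : Matrix V V ℝ) - M) *ᵥ y = 0 := by
      have hub := rayleigh_le hM y
      have : y ⬝ᵥ (lamMax M • (1 : Matrix V V ℝ) - M) *ᵥ y
          = lamMax M * (y ⬝ᵥ y) - y ⬝ᵥ M *ᵥ y := by
        rw [Matrix.sub_mulVec, dotProduct_sub,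
          Matrix.smul_mulVec, Matrix.one_mulVec, dotProduct_smul]
        simp [smul_eq_mul]
      rw [this, hyy]
      rw [hyy] at hub
      linarith
    have := ((psd_shift hM).dotProduct_mulVec_zero_iff y).1 (by rwa [star_trivial])
    rw [Matrix.sub_mulVec, sub_eq_zero, Matrix.smul_mulVec, Matrix.one_mulVec] at this
    exact this.symm

end general



section
variable {s q : ℕ} {m : Fin q → ℕ}

@[simp] lemma gj_adj_ll (a a' : Fin s) :
    (graphJoin (⊤ : SimpleGraph (Fin s)) (cliquesUnion m)).Adj (Sum.inl a) (Sum.inl a') ↔ a ≠ a' := by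
  simp [graphJoin]

@[simp] lemma gj_adj_lr (a : Fin s) (σ : Σ k : Fin q, Fin (m k)) :
    (graphJoin (⊤ : SimpleGraph (Fin s)) (cliquesUnion m)).Adj (Sum.inl a) (Sum.inr σ) := by
  simp [graphJoin]

@[simp] lemma gj_adj_rl (a : Fin s) (σ : Σ k : Fin q, Fin (m k)) :
    (graphJoin (⊤ : SimpleGraph (Fin s)) (cliquesUnion m)).Adj (Sum.inr σ) (Sum.inl a) := by
  simp [graphJoin]

@[simp] lemma gj_adj_rr (σ τ : Σ k : Fin q, Fin (m k)) :
    (graphJoin (⊤ : SimpleGraph (Fin s)) (cliquesUnion m)).Adj (Sum.inr σ) (Sum.inr τ) ↔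
      (σ.1 = τ.1 ∧ σ ≠ τ) := by
  constructor
  · intro h; exact h
  · intro h; exact h

lemma nbr_inl (x : (Fin s ⊕ Σ k : Fin q, Fin (m k)) → ℝ) (a : Fin s) :
    ∑ v ∈ (graphJoin (⊤ : SimpleGraph (Fin s)) (cliquesUnion m)).neighborFinset (Sum.inl a), x v
      = ((∑ a', x (Sum.inl a')) + ∑ σ : (Σ k : Fin q, Fin (m k)), x (Sum.inr σ)) - x (Sum.inl a) := by
  rw [SimpleGraph.neighborFinset_eq_filter, Finset.sum_filter, Fintype.sum_sum_type]
  have h1 : ∀ a' : Fin s,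
      (if (graphJoin (⊤ : SimpleGraph (Fin s)) (cliquesUnion m)).Adj (Sum.inl a) (Sum.inl a')
        then x (Sum.inl a') else 0)
      = x (Sum.inl a') - (if a' = a then x (Sum.inl a') else 0) := by
    intro a'
    by_cases h : a' = a <;> simp [h, Ne.symm]
  simp only [h1, gj_adj_lr, if_true, Finset.sum_sub_distrib, Finset.sum_ite_eq' Finset.univ a]
  simp
  ring
end

section
variable {s q : ℕ} {m : Fin q → ℕ}

lemma nbr_inr (x : (Fin s ⊕ Σ k : Fin q, Fin (m k)) → ℝ) (k : Fin q) (t : Fin (m k)) :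
    ∑ v ∈ (graphJoin (⊤ : SimpleGraph (Fin s)) (cliquesUnion m)).neighborFinset
        (Sum.inr ⟨k, t⟩), x v
      = ((∑ a', x (Sum.inl a')) + ∑ t' : Fin (m k), x (Sum.inr ⟨k, t'⟩))
          - x (Sum.inr ⟨k, t⟩) := by
  rw [SimpleGraph.neighborFinset_eq_filter, Finset.sum_filter, Fintype.sum_sum_type]
  have h0 : ∀ a' : Fin s,
      (if (graphJoin (⊤ : SimpleGraph (Fin s)) (cliquesUnion m)).Adj (Sum.inr ⟨k, t⟩)
          (Sum.inl a') then x (Sum.inl a') else 0) = x (Sum.inl a') := by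
    intro a'; simp
  have h1 : (∑ σ : (Σ kk : Fin q, Fin (m kk)),
      if (graphJoin (⊤ : SimpleGraph (Fin s)) (cliquesUnion m)).Adj (Sum.inr ⟨k, t⟩)
        (Sum.inr σ) then x (Sum.inr σ) else 0)
      = (∑ t' : Fin (m k), x (Sum.inr ⟨k, t'⟩)) - x (Sum.inr ⟨k, t⟩) := by
    rw [← Finset.univ_sigma_univ, Finset.sum_sigma]
    have h2 : ∀ k' : Fin q,
        (∑ t' : Fin (m k'),
          if (graphJoin (⊤ : SimpleGraph (Fin s)) (cliquesUnion m)).Adj (Sum.inr ⟨k, t⟩)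
            (Sum.inr ⟨k', t'⟩) then x (Sum.inr ⟨k', t'⟩) else 0)
        = if k' = k then ((∑ t' : Fin (m k), x (Sum.inr ⟨k, t'⟩)) - x (Sum.inr ⟨k, t⟩))
          else 0 := by
      intro k'
      by_cases h : k' = k
      · subst h
        rw [if_pos rfl]
        have h3 : ∀ t' : Fin (m k'),
            (if (graphJoin (⊤ : SimpleGraph (Fin s)) (cliquesUnion m)).Adj (Sum.inr ⟨k', t⟩)
              (Sum.inr ⟨k', t'⟩) then x (Sum.inr ⟨k', t'⟩) else 0)
            = x (Sum.inr ⟨k', t'⟩) - (if t' = t then x (Sum.inr ⟨k', t'⟩) else 0) := by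
          intro t'
          by_cases ht : t' = t
          · subst ht; simp
          · rw [if_neg ht]
            rw [if_pos ?_, sub_zero]
            refine ⟨rfl, ?_⟩
            simp only [ne_eq, Sigma.mk.inj_iff, heq_eq_eq, true_and]
            exact fun hh => ht hh.symm
        simp only [h3, Finset.sum_sub_distrib, Finset.sum_ite_eq' Finset.univ t,
          Finset.mem_univ, if_true]
      · rw [if_neg h]
        refine Finset.sum_eq_zero fun t' _ => ?_
        rw [if_neg]
        intro hadj
        exact h (hadj.1.symm)
    simp only [h2, Finset.sum_ite_eq' Finset.univ k, Finset.mem_univ, if_true]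
  rw [h1]
  simp only [h0]
  ring

lemma degR_inl (a : Fin s) :
    (((graphJoin (⊤ : SimpleGraph (Fin s)) (cliquesUnion m)).degree (Sum.inl a) : ℝ))
      = (s : ℝ) + (∑ k, (m k : ℝ)) - 1 := by
  have h : ((graphJoin (⊤ : SimpleGraph (Fin s)) (cliquesUnion m)).degree (Sum.inl a) : ℝ)
      = ∑ v ∈ (graphJoin (⊤ : SimpleGraph (Fin s)) (cliquesUnion m)).neighborFinset
          (Sum.inl a), (1 : ℝ) := by
    rw [SimpleGraph.degree, Finset.card_eq_sum_ones]
    push_cast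
    rfl
  rw [h, nbr_inl (fun _ => (1 : ℝ))]
  simp [Finset.card_univ, Fintype.card_sigma]

lemma degR_inr (k : Fin q) (t : Fin (m k)) :
    (((graphJoin (⊤ : SimpleGraph (Fin s)) (cliquesUnion m)).degree (Sum.inr ⟨k, t⟩) : ℝ))
      = (s : ℝ) + (m k : ℝ) - 1 := by
  have h : ((graphJoin (⊤ : SimpleGraph (Fin s)) (cliquesUnion m)).degree (Sum.inr ⟨k, t⟩) : ℝ)
      = ∑ v ∈ (graphJoin (⊤ : SimpleGraph (Fin s)) (cliquesUnion m)).neighborFinset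
          (Sum.inr ⟨k, t⟩), (1 : ℝ) := by
    rw [SimpleGraph.degree, Finset.card_eq_sum_ones]
    push_cast
    rfl
  rw [h, nbr_inr (fun _ => (1 : ℝ))]
  simp [Finset.card_univ]
end

section
variable {s q : ℕ} {m : Fin q → ℕ}

/-- hub sum -/
def hubS (x : (Fin s ⊕ Σ k : Fin q, Fin (m k)) → ℝ) : ℝ := ∑ a, x (Sum.inl a)
/-- block sum -/
def blkS (x : (Fin s ⊕ Σ k : Fin q, Fin (m k)) → ℝ) (k : Fin q) : ℝ :=
  ∑ t, x (Sum.inr ⟨k, t⟩)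
def hubQ (x : (Fin s ⊕ Σ k : Fin q, Fin (m k)) → ℝ) : ℝ := ∑ a, x (Sum.inl a) ^ 2
def blkQ (x : (Fin s ⊕ Σ k : Fin q, Fin (m k)) → ℝ) (k : Fin q) : ℝ :=
  ∑ t, x (Sum.inr ⟨k, t⟩) ^ 2

lemma sigma_split (f : (Σ k : Fin q, Fin (m k)) → ℝ) :
    (∑ σ : (Σ k : Fin q, Fin (m k)), f σ) = ∑ k, ∑ t : Fin (m k), f ⟨k, t⟩ := by
  rw [← Finset.univ_sigma_univ, Finset.sum_sigma]

lemma Amat_mulVec_inl (a : ℝ) (x : (Fin s ⊕ Σ k : Fin q, Fin (m k)) → ℝ) (aa : Fin s) :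
    ((a • Matrix.diagonal
        (fun v => ((graphJoin (⊤ : SimpleGraph (Fin s)) (cliquesUnion m)).degree v : ℝ))
      + (1 - a) • (graphJoin (⊤ : SimpleGraph (Fin s)) (cliquesUnion m)).adjMatrix ℝ) *ᵥ x)
        (Sum.inl aa)
      = a * ((s : ℝ) + (∑ k, (m k : ℝ)) - 1) * x (Sum.inl aa)
        + (1 - a) * ((hubS x + ∑ k, blkS x k) - x (Sum.inl aa)) := by
  rw [Matrix.add_mulVec, Matrix.smul_mulVec, Matrix.smul_mulVec]
  simp only [Pi.add_apply, Pi.smul_apply, smul_eq_mul, Matrix.mulVec_diagonal,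
    SimpleGraph.adjMatrix_mulVec_apply]
  rw [degR_inl, nbr_inl, hubS]
  have : (∑ σ : (Σ k : Fin q, Fin (m k)), x (Sum.inr σ)) = ∑ k, blkS x k := by
    rw [sigma_split]; rfl
  rw [this]
  ring

lemma Amat_mulVec_inr (a : ℝ) (x : (Fin s ⊕ Σ k : Fin q, Fin (m k)) → ℝ) (k : Fin q)
    (t : Fin (m k)) :
    ((a • Matrix.diagonal
        (fun v => ((graphJoin (⊤ : SimpleGraph (Fin s)) (cliquesUnion m)).degree v : ℝ))
      + (1 - a) • (graphJoin (⊤ : SimpleGraph (Fin s)) (cliquesUnion m)).adjMatrix ℝ) *ᵥ x)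
        (Sum.inr ⟨k, t⟩)
      = a * ((s : ℝ) + (m k : ℝ) - 1) * x (Sum.inr ⟨k, t⟩)
        + (1 - a) * ((hubS x + blkS x k) - x (Sum.inr ⟨k, t⟩)) := by
  rw [Matrix.add_mulVec, Matrix.smul_mulVec, Matrix.smul_mulVec]
  simp only [Pi.add_apply, Pi.smul_apply, smul_eq_mul, Matrix.mulVec_diagonal,
    SimpleGraph.adjMatrix_mulVec_apply]
  rw [degR_inr, nbr_inr, hubS, blkS]
  ring

lemma qf (a : ℝ) (x : (Fin s ⊕ Σ k : Fin q, Fin (m k)) → ℝ) :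
    x ⬝ᵥ ((a • Matrix.diagonal
        (fun v => ((graphJoin (⊤ : SimpleGraph (Fin s)) (cliquesUnion m)).degree v : ℝ))
      + (1 - a) • (graphJoin (⊤ : SimpleGraph (Fin s)) (cliquesUnion m)).adjMatrix ℝ) *ᵥ x)
      = ((a * ((s : ℝ) + (∑ k, (m k : ℝ)) - 1) - (1 - a)) * hubQ x
          + (1 - a) * (hubS x + ∑ k, blkS x k) * hubS x)
        + ∑ k, ((a * ((s : ℝ) + (m k : ℝ) - 1) - (1 - a)) * blkQ x k
          + (1 - a) * (hubS x + blkS x k) * blkS x k) := by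
  rw [dotProduct, Fintype.sum_sum_type]
  congr 1
  · have : ∀ aa : Fin s,
        x (Sum.inl aa) * ((a • Matrix.diagonal
            (fun v => ((graphJoin (⊤ : SimpleGraph (Fin s)) (cliquesUnion m)).degree v : ℝ))
          + (1 - a) • (graphJoin (⊤ : SimpleGraph (Fin s)) (cliquesUnion m)).adjMatrix ℝ) *ᵥ x)
            (Sum.inl aa)
        = (a * ((s : ℝ) + (∑ k, (m k : ℝ)) - 1) - (1 - a)) * x (Sum.inl aa) ^ 2
          + ((1 - a) * (hubS x + ∑ k, blkS x k)) * x (Sum.inl aa) := by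
      intro aa
      rw [Amat_mulVec_inl]
      ring
    simp only [this, Finset.sum_add_distrib, ← Finset.mul_sum]
    rw [hubQ, hubS]
  · rw [sigma_split]
    refine Finset.sum_congr rfl fun k _ => ?_
    have : ∀ t : Fin (m k),
        x (Sum.inr ⟨k, t⟩) * ((a • Matrix.diagonal
            (fun v => ((graphJoin (⊤ : SimpleGraph (Fin s)) (cliquesUnion m)).degree v : ℝ))
          + (1 - a) • (graphJoin (⊤ : SimpleGraph (Fin s)) (cliquesUnion m)).adjMatrix ℝ) *ᵥ x)
            (Sum.inr ⟨k, t⟩)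
        = (a * ((s : ℝ) + (m k : ℝ) - 1) - (1 - a)) * x (Sum.inr ⟨k, t⟩) ^ 2
          + ((1 - a) * (hubS x + blkS x k)) * x (Sum.inr ⟨k, t⟩) := by
      intro t
      rw [Amat_mulVec_inr]
      ring
    simp only [this, Finset.sum_add_distrib, ← Finset.mul_sum]
    rw [blkQ, blkS]

lemma norm_split (x : (Fin s ⊕ Σ k : Fin q, Fin (m k)) → ℝ) :
    x ⬝ᵥ x = hubQ x + ∑ k, blkQ x k := by
  rw [dotProduct, Fintype.sum_sum_type]
  congr 1
  · rw [hubQ]; exact Finset.sum_congr rfl fun aa _ => (sq (x (Sum.inl aa))).symm ▸ (by ring)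
  · rw [sigma_split]
    refine Finset.sum_congr rfl fun k _ => ?_
    rw [blkQ]
    exact Finset.sum_congr rfl fun t _ => by ring
end

section mainproof
open Matrix Polynomial Finset

/-- **Lemma 2.3** (Wu, Wang and Kang).  Let `α ∈ [0,1)`, `s ≥ 1`, `q ≥ 2`, and let
`n₁, …, n_q` be positive integers with `∑ n_k = n - s`.  If `i ≠ j` and `n_i ≥ n_j`,
then moving one vertex from the `j`-th complete block to the `i`-th one strictly
increases the `A_α`-spectral radius of `K_s ∨ (K_{n₁} ∪ ⋯ ∪ K_{n_q})`. -/
theorem rhoAlpha_shift_lt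
    (α : ℝ) (hα0 : 0 ≤ α) (hα1 : α < 1)
    (s q n : ℕ) (hs : 1 ≤ s) (hq : 2 ≤ q)
    (m : Fin q → ℕ) (hpos : ∀ k, 1 ≤ m k) (hsum : ∑ k, m k = n - s)
    (i j : Fin q) (hij : i ≠ j) (hji : m j ≤ m i) :
    rhoAlpha α (graphJoin (⊤ : SimpleGraph (Fin s)) (cliquesUnion m)) <
      rhoAlpha α (graphJoin (⊤ : SimpleGraph (Fin s))
        (cliquesUnion (Function.update (Function.update m i (m i + 1)) j (m j - 1)))) := by
  set m' : Fin q → ℕ := Function.update (Function.update m i (m i + 1)) j (m j - 1) with hm'def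
  have hm'i : m' i = m i + 1 := by
    rw [hm'def, Function.update_of_ne hij, Function.update_self]
  have hm'j : m' j = m j - 1 := by rw [hm'def, Function.update_self]
  have hm'k : ∀ k, k ≠ i → k ≠ j → m' k = m k := by
    intro k hki hkj
    rw [hm'def, Function.update_of_ne hkj, Function.update_of_ne hki]
  haveI hne : Nonempty (Fin s ⊕ Σ k : Fin q, Fin (m k)) := ⟨Sum.inl ⟨0, hs⟩⟩
  haveI hne' : Nonempty (Fin s ⊕ Σ k : Fin q, Fin (m' k)) := ⟨Sum.inl ⟨0, hs⟩⟩
  set G := graphJoin (⊤ : SimpleGraph (Fin s)) (cliquesUnion m) with hG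
  set G' := graphJoin (⊤ : SimpleGraph (Fin s)) (cliquesUnion m') with hG'
  set A : Matrix (Fin s ⊕ Σ k : Fin q, Fin (m k)) (Fin s ⊕ Σ k : Fin q, Fin (m k)) ℝ :=
    α • Matrix.diagonal (fun v => (G.degree v : ℝ)) + (1 - α) • G.adjMatrix ℝ with hA
  set A' : Matrix (Fin s ⊕ Σ k : Fin q, Fin (m' k)) (Fin s ⊕ Σ k : Fin q, Fin (m' k)) ℝ :=
    α • Matrix.diagonal (fun v => (G'.degree v : ℝ)) + (1 - α) • G'.adjMatrix ℝ with hA'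
  have hherm : A.IsHermitian := by
    show Aᴴ = A
    ext u v
    simp only [Matrix.conjTranspose_apply, hA, Matrix.add_apply, Matrix.smul_apply,
      smul_eq_mul, star_trivial]
    by_cases h : u = v
    · subst h; rfl
    · rw [Matrix.diagonal_apply_ne _ h, Matrix.diagonal_apply_ne _ (Ne.symm h),
        SimpleGraph.adjMatrix_apply, SimpleGraph.adjMatrix_apply, G.adj_comm]
  have hherm' : A'.IsHermitian := by
    show A'ᴴ = A'
    ext u v
    simp only [Matrix.conjTranspose_apply, hA', Matrix.add_apply, Matrix.smul_apply,
      smul_eq_mul, star_trivial]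
    by_cases h : u = v
    · subst h; rfl
    · rw [Matrix.diagonal_apply_ne _ h, Matrix.diagonal_apply_ne _ (Ne.symm h),
        SimpleGraph.adjMatrix_apply, SimpleGraph.adjMatrix_apply, G'.adj_comm]
  have hnn : ∀ u v, 0 ≤ A u v := by
    intro u v
    simp only [hA, Matrix.add_apply, Matrix.smul_apply, smul_eq_mul]
    have h1 : (0 : ℝ) ≤ Matrix.diagonal (fun v => (G.degree v : ℝ)) u v := by
      by_cases h : u = v
      · subst h; rw [Matrix.diagonal_apply_eq]; positivity
      · rw [Matrix.diagonal_apply_ne _ h]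
    have h2 : (0 : ℝ) ≤ G.adjMatrix ℝ u v := by
      rw [SimpleGraph.adjMatrix_apply]; split <;> norm_num
    nlinarith [sub_pos.2 hα1]
  obtain ⟨y, hy0, hynn, hyeig⟩ := exists_nonneg_eigenvector hherm hnn
  set ρ : ℝ := lamMax A with hρ
  have hzero : ∀ u, y u = 0 → ∀ v, G.Adj u v → y v = 0 := by
    intro u hu v hv
    have heq : (A *ᵥ y) u = ρ * y u := by rw [hyeig]; simp
    rw [hA, Matrix.add_mulVec, Matrix.smul_mulVec, Matrix.smul_mulVec] at heq
    simp only [Pi.add_apply, Pi.smul_apply, smul_eq_mul, Matrix.mulVec_diagonal,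
      SimpleGraph.adjMatrix_mulVec_apply] at heq
    rw [hu, mul_zero, mul_zero, mul_zero, zero_add] at heq
    have hsum0 : ∑ w ∈ G.neighborFinset u, y w = 0 := by
      have h1a : (1 : ℝ) - α ≠ 0 := by linarith
      exact (mul_eq_zero.1 heq).resolve_left h1a
    have := (Finset.sum_eq_zero_iff_of_nonneg (fun w _ => hynn w)).1 hsum0
    exact this v ((SimpleGraph.mem_neighborFinset G u v).2 hv)
  set a0 : Fin s := ⟨0, hs⟩ with ha0
  have hposhub : 0 < y (Sum.inl a0) := by
    rcases lt_or_eq_of_le (hynn (Sum.inl a0)) with h | h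
    · exact h
    · exfalso
      apply hy0
      funext v
      rcases eq_or_ne v (Sum.inl a0) with rfl | hv
      · exact h.symm
      · refine hzero _ h.symm v ?_
        cases v with
        | inl a' =>
          have haa : a0 ≠ a' := fun hh => hv (by rw [hh])
          exact (gj_adj_ll a0 a').2 haa
        | inr σ => exact gj_adj_lr a0 σ
  have hyp : ∀ u, 0 < y u := by
    intro u
    rcases lt_or_eq_of_le (hynn u) with h | h
    · exact h
    · exfalso
      rcases eq_or_ne u (Sum.inl a0) with rfl | hu
      · exact absurd h.symm (ne_of_gt hposhub)
      · have hz : y (Sum.inl a0) = 0 := by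
          refine hzero u h.symm _ ?_
          cases u with
          | inl a' =>
            have haa : a' ≠ a0 := fun hh => hu (by rw [hh])
            exact (gj_adj_ll a' a0).2 haa
          | inr σ => exact gj_adj_rl a0 σ
        exact absurd hz (ne_of_gt hposhub)
  -- eigen-equation on block vertices
  have heigr : ∀ (k : Fin q) (t : Fin (m k)),
      (ρ + (1 - α) - α * ((s : ℝ) + (m k : ℝ) - 1)) * y (Sum.inr ⟨k, t⟩)
        = (1 - α) * (hubS y + blkS y k) := by
    intro k t
    have heq : (A *ᵥ y) (Sum.inr ⟨k, t⟩) = ρ * y (Sum.inr ⟨k, t⟩) := by rw [hyeig]; simp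
    rw [hA, Amat_mulVec_inr] at heq
    linarith [heq]
  have hcoefpos : ∀ k : Fin q, 0 < ρ + (1 - α) - α * ((s : ℝ) + (m k : ℝ) - 1) := by
    intro k
    have t0 : Fin (m k) := ⟨0, hpos k⟩
    have hdiag : A (Sum.inr ⟨k, t0⟩) (Sum.inr ⟨k, t0⟩) = α * ((s : ℝ) + (m k : ℝ) - 1) := by
      simp only [hA, Matrix.add_apply, Matrix.smul_apply, smul_eq_mul,
        Matrix.diagonal_apply_eq, SimpleGraph.adjMatrix_apply,
        if_neg (G.loopless.irrefl (Sum.inr ⟨k, t0⟩)), mul_zero, add_zero]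
      rw [degR_inr]
    have h := diag_le_lamMax hherm (Sum.inr ⟨k, t0⟩)
    rw [hdiag] at h
    rw [← hρ] at h
    linarith
  -- block values
  set b : Fin q → ℝ := fun k => y (Sum.inr ⟨k, ⟨0, hpos k⟩⟩) with hb
  have hbt : ∀ (k : Fin q) (t : Fin (m k)), y (Sum.inr ⟨k, t⟩) = b k := by
    intro k t
    have h1 := heigr k t
    have h2 := heigr k ⟨0, hpos k⟩
    have := h1.trans h2.symm
    exact mul_left_cancel₀ (ne_of_gt (hcoefpos k)) this
  have hbpos : ∀ k, 0 < b k := fun k => hyp _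
  have hHpos : 0 < hubS y := by
    rw [hubS]
    exact Finset.sum_pos (fun a _ => hyp _) ⟨a0, Finset.mem_univ a0⟩
  have hSk : ∀ k, blkS y k = (m k : ℝ) * b k := by
    intro k
    rw [blkS]
    simp only [hbt]
    rw [Finset.sum_const, Finset.card_univ, Fintype.card_fin, nsmul_eq_mul]
  have hQk : ∀ k, blkQ y k = (m k : ℝ) * b k ^ 2 := by
    intro k
    rw [blkQ]
    simp only [hbt]
    rw [Finset.sum_const, Finset.card_univ, Fintype.card_fin, nsmul_eq_mul]
  -- ordering of block values
  have hkey : ∀ k, (ρ + 1 - (m k : ℝ) - α * s) * b k = (1 - α) * hubS y := by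
    intro k
    have h1 := heigr k ⟨0, hpos k⟩
    rw [hSk] at h1
    have hb0 : y (Sum.inr ⟨k, ⟨0, hpos k⟩⟩) = b k := hbt k _
    rw [hb0] at h1
    nlinarith [h1]
  have hcpos : ∀ k, 0 < ρ + 1 - (m k : ℝ) - α * s := by
    intro k
    by_contra h
    push_neg at h
    have h1 := hkey k
    nlinarith [hbpos k, hHpos, sub_pos.2 hα1]
  have hbij : b j ≤ b i := by
    have h1 := hkey i
    have h2 := hkey j
    have hmm : (m j : ℝ) ≤ (m i : ℝ) := by exact_mod_cast hji
    nlinarith [hcpos i, hcpos j, hbpos i, hbpos j]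
  -- test vector on G'
  set y' : (Fin s ⊕ Σ k : Fin q, Fin (m' k)) → ℝ := fun u =>
    match u with
    | Sum.inl a => y (Sum.inl a)
    | Sum.inr σ => if σ.1 = i ∧ (σ.2 : ℕ) = m i then b j else b σ.1 with hy'
  have hH' : hubS y' = hubS y := rfl
  have hQ' : hubQ y' = hubQ y := rfl
  -- block sums of y'
  have hys : ∀ (k : Fin q) (t : Fin (m' k)),
      y' (Sum.inr ⟨k, t⟩) = if k = i ∧ (t : ℕ) = m i then b j else b k := by
    intro k t
    simp only [hy']
  have hS'i : blkS y' i = (m i : ℝ) * b i + b j := by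
    rw [blkS]
    simp only [hys, eq_self_iff_true, true_and]
    rw [Fin.sum_univ_eq_sum_range (fun r => if r = m i then b j else b i), hm'i,
      Finset.sum_range_succ, if_pos rfl]
    have : ∀ r ∈ Finset.range (m i), (if r = m i then b j else b i) = b i := by
      intro r hr
      rw [if_neg (Nat.ne_of_lt (Finset.mem_range.1 hr))]
    rw [Finset.sum_congr rfl this, Finset.sum_const, Finset.card_range, nsmul_eq_mul]
  have hS'j : blkS y' j = ((m j : ℝ) - 1) * b j := by
    rw [blkS]
    simp only [hys]
    have : ∀ t : Fin (m' j), (if j = i ∧ ((t : ℕ) = m i) then b j else b j) = b j := by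
      intro t; split <;> rfl
    rw [Finset.sum_congr rfl (fun t _ => this t), Finset.sum_const, Finset.card_univ,
      Fintype.card_fin, nsmul_eq_mul, hm'j]
    rw [Nat.cast_sub (hpos j), Nat.cast_one]
  have hS'k : ∀ k, k ≠ i → k ≠ j → blkS y' k = (m k : ℝ) * b k := by
    intro k hki hkj
    rw [blkS]
    simp only [hys]
    have : ∀ t : Fin (m' k), (if k = i ∧ ((t : ℕ) = m i) then b j else b k) = b k := by
      intro t; rw [if_neg (fun hh => hki hh.1)]
    rw [Finset.sum_congr rfl (fun t _ => this t), Finset.sum_const, Finset.card_univ,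
      Fintype.card_fin, nsmul_eq_mul, hm'k k hki hkj]
  have hQ'i : blkQ y' i = (m i : ℝ) * b i ^ 2 + b j ^ 2 := by
    rw [blkQ]
    simp only [hys, eq_self_iff_true, true_and]
    rw [Fin.sum_univ_eq_sum_range (fun r => (if r = m i then b j else b i) ^ 2), hm'i,
      Finset.sum_range_succ, if_pos rfl]
    have : ∀ r ∈ Finset.range (m i), (if r = m i then b j else b i) ^ 2 = b i ^ 2 := by
      intro r hr
      rw [if_neg (Nat.ne_of_lt (Finset.mem_range.1 hr))]
    rw [Finset.sum_congr rfl this, Finset.sum_const, Finset.card_range, nsmul_eq_mul]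
  have hQ'j : blkQ y' j = ((m j : ℝ) - 1) * b j ^ 2 := by
    rw [blkQ]
    simp only [hys]
    have : ∀ t : Fin (m' j), (if j = i ∧ ((t : ℕ) = m i) then b j else b j) ^ 2 = b j ^ 2 := by
      intro t; split <;> rfl
    rw [Finset.sum_congr rfl (fun t _ => this t), Finset.sum_const, Finset.card_univ,
      Fintype.card_fin, nsmul_eq_mul, hm'j]
    rw [Nat.cast_sub (hpos j), Nat.cast_one]
  have hQ'k : ∀ k, k ≠ i → k ≠ j → blkQ y' k = (m k : ℝ) * b k ^ 2 := by
    intro k hki hkj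
    rw [blkQ]
    simp only [hys]
    have : ∀ t : Fin (m' k), (if k = i ∧ ((t : ℕ) = m i) then b j else b k) ^ 2 = b k ^ 2 := by
      intro t; rw [if_neg (fun hh => hki hh.1)]
    rw [Finset.sum_congr rfl (fun t _ => this t), Finset.sum_const, Finset.card_univ,
      Fintype.card_fin, nsmul_eq_mul, hm'k k hki hkj]
  -- sum splitting
  have hjmem : j ∈ Finset.univ.erase i := Finset.mem_erase.2 ⟨Ne.symm hij, Finset.mem_univ j⟩
  have hsplit : ∀ f : Fin q → ℝ,
      (∑ k, f k) = f i + f j + ∑ k ∈ (Finset.univ.erase i).erase j, f k := by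
    intro f
    rw [← Finset.add_sum_erase _ f (Finset.mem_univ i), ← Finset.add_sum_erase _ f hjmem]
    ring
  have htail : ∀ k ∈ (Finset.univ.erase i).erase j, k ≠ i ∧ k ≠ j := by
    intro k hk
    rw [Finset.mem_erase, Finset.mem_erase] at hk
    exact ⟨hk.2.1, hk.1⟩
  -- ∑ m' = ∑ m (real casts)
  have hNeq : (∑ k, (m' k : ℝ)) = ∑ k, (m k : ℝ) := by
    rw [hsplit (fun k => (m' k : ℝ)), hsplit (fun k => (m k : ℝ))]
    have h1 : ((m' i : ℕ) : ℝ) = (m i : ℝ) + 1 := by rw [hm'i]; push_cast; ring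
    have h2 : ((m' j : ℕ) : ℝ) = (m j : ℝ) - 1 := by
      rw [hm'j, Nat.cast_sub (hpos j), Nat.cast_one]
    rw [h1, h2, Finset.sum_congr rfl (fun k hk => by rw [hm'k k (htail k hk).1 (htail k hk).2])]
    ring
  have hSeq : (∑ k, blkS y' k) = ∑ k, blkS y k := by
    rw [hsplit (blkS y'), hsplit (blkS y), hS'i, hS'j,
      Finset.sum_congr rfl (fun k hk => by
        rw [hS'k k (htail k hk).1 (htail k hk).2, ← hSk k]),
      hSk i, hSk j]
    ring
  have hQeq : (∑ k, blkQ y' k) = ∑ k, blkQ y k := by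
    rw [hsplit (blkQ y'), hsplit (blkQ y), hQ'i, hQ'j,
      Finset.sum_congr rfl (fun k hk => by
        rw [hQ'k k (htail k hk).1 (htail k hk).2, ← hQk k]),
      hQk i, hQk j]
    ring
  -- norms agree
  have hnorm : y' ⬝ᵥ y' = y ⬝ᵥ y := by
    rw [norm_split, norm_split, hQ', hQeq]
  have hyy : 0 < y ⬝ᵥ y := by
    rw [norm_split]
    have h1 : 0 < hubQ y := by
      rw [hubQ]
      exact Finset.sum_pos (fun a _ => pow_pos (hyp _) 2) ⟨a0, Finset.mem_univ a0⟩
    have h2 : 0 ≤ ∑ k, blkQ y k := by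
      refine Finset.sum_nonneg fun k _ => ?_
      rw [hQk k]; positivity
    linarith
  -- quadratic forms
  have hQtot : y ⬝ᵥ A *ᵥ y = ρ * (y ⬝ᵥ y) := by
    rw [hyeig, dotProduct_smul, smul_eq_mul]
  have hQlt : y ⬝ᵥ A *ᵥ y < y' ⬝ᵥ A' *ᵥ y' := by
    rw [hA, hA', qf, qf, hH', hQ', hSeq, hNeq]
    have hexp : ∀ (M B BQ : Fin q → ℝ),
        (∑ k, ((α * ((s : ℝ) + M k - 1) - (1 - α)) * BQ k
          + (1 - α) * (hubS y + B k) * B k))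
        = ((α * ((s : ℝ) + M i - 1) - (1 - α)) * BQ i
            + (1 - α) * (hubS y + B i) * B i)
          + ((α * ((s : ℝ) + M j - 1) - (1 - α)) * BQ j
            + (1 - α) * (hubS y + B j) * B j)
          + ∑ k ∈ (Finset.univ.erase i).erase j,
              ((α * ((s : ℝ) + M k - 1) - (1 - α)) * BQ k
                + (1 - α) * (hubS y + B k) * B k) := by
      intro M B BQ
      exact hsplit _
    rw [hexp (fun k => (m' k : ℝ)) (blkS y') (blkQ y'),
      hexp (fun k => (m k : ℝ)) (blkS y) (blkQ y)]
    have htaileq : (∑ k ∈ (Finset.univ.erase i).erase j,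
          ((α * ((s : ℝ) + (m' k : ℝ) - 1) - (1 - α)) * blkQ y' k
            + (1 - α) * (hubS y + blkS y' k) * blkS y' k))
        = ∑ k ∈ (Finset.univ.erase i).erase j,
          ((α * ((s : ℝ) + (m k : ℝ) - 1) - (1 - α)) * blkQ y k
            + (1 - α) * (hubS y + blkS y k) * blkS y k) := by
      refine Finset.sum_congr rfl fun k hk => ?_
      obtain ⟨hki, hkj⟩ := htail k hk
      rw [hm'k k hki hkj, hS'k k hki hkj, hQ'k k hki hkj, hSk k, hQk k]
    rw [htaileq]
    -- now pure algebra on the i,j terms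
    have h1 : ((m' i : ℕ) : ℝ) = (m i : ℝ) + 1 := by rw [hm'i]; push_cast; ring
    have h2 : ((m' j : ℕ) : ℝ) = (m j : ℝ) - 1 := by
      rw [hm'j, Nat.cast_sub (hpos j), Nat.cast_one]
    rw [h1, h2, hS'i, hS'j, hQ'i, hQ'j, hSk i, hSk j, hQk i, hQk j]
    have hmm : (m j : ℝ) ≤ (m i : ℝ) := by exact_mod_cast hji
    have hm1 : (1 : ℝ) ≤ (m j : ℝ) := by exact_mod_cast hpos j
    have hb2 : 0 < b j := hbpos j
    have hb1 : b j ≤ b i := hbij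
    have h1α : 0 < 1 - α := by linarith
    have hD : (α * ((s : ℝ) + ((m i : ℝ) + 1) - 1) - (1 - α)) * ((m i : ℝ) * b i ^ 2 + b j ^ 2)
          + (1 - α) * (hubS y + ((m i : ℝ) * b i + b j)) * ((m i : ℝ) * b i + b j)
          + ((α * ((s : ℝ) + ((m j : ℝ) - 1) - 1) - (1 - α)) * (((m j : ℝ) - 1) * b j ^ 2)
          + (1 - α) * (hubS y + ((m j : ℝ) - 1) * b j) * (((m j : ℝ) - 1) * b j))
          - ((α * ((s : ℝ) + (m i : ℝ) - 1) - (1 - α)) * ((m i : ℝ) * b i ^ 2)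
          + (1 - α) * (hubS y + (m i : ℝ) * b i) * ((m i : ℝ) * b i)
          + ((α * ((s : ℝ) + (m j : ℝ) - 1) - (1 - α)) * ((m j : ℝ) * b j ^ 2)
          + (1 - α) * (hubS y + (m j : ℝ) * b j) * ((m j : ℝ) * b j)))
        = α * ((m i : ℝ) * b i ^ 2 + ((m i : ℝ) - 2 * (m j : ℝ) + 2) * b j ^ 2)
          + (1 - α) * (2 * (m i : ℝ) * b i * b j - 2 * ((m j : ℝ) - 1) * b j ^ 2) := by
      ring
    have hmi0 : (0 : ℝ) ≤ (m i : ℝ) := Nat.cast_nonneg _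
    have hbb : b j ^ 2 ≤ b i ^ 2 := by nlinarith
    have t1 : (2 * (m i : ℝ) - 2 * (m j : ℝ) + 2) * b j ^ 2
        ≤ (m i : ℝ) * b i ^ 2 + ((m i : ℝ) - 2 * (m j : ℝ) + 2) * b j ^ 2 := by
      nlinarith [mul_le_mul_of_nonneg_left hbb hmi0]
    have t2 : (2 * (m i : ℝ) - 2 * (m j : ℝ) + 2) * b j ^ 2
        ≤ 2 * (m i : ℝ) * b i * b j - 2 * ((m j : ℝ) - 1) * b j ^ 2 := by
      nlinarith [mul_nonneg (mul_nonneg (by linarith : (0:ℝ) ≤ 2 * (m i : ℝ))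
        hb2.le) (sub_nonneg.2 hb1)]
    have t3 : 0 < (2 * (m i : ℝ) - 2 * (m j : ℝ) + 2) * b j ^ 2 := by
      have : (0 : ℝ) < 2 * (m i : ℝ) - 2 * (m j : ℝ) + 2 := by linarith
      positivity
    have u1 := mul_le_mul_of_nonneg_left t1 hα0
    have u2 := mul_le_mul_of_nonneg_left t2 h1α.le
    nlinarith [hD, u1, u2, t3]
  have hray := rayleigh_le hherm' y'
  rw [hnorm] at hray
  have hfin : ρ * (y ⬝ᵥ y) < lamMax A' * (y ⬝ᵥ y) := by
    calc ρ * (y ⬝ᵥ y) = y ⬝ᵥ A *ᵥ y := hQtot.symm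
      _ < y' ⬝ᵥ A' *ᵥ y' := hQlt
      _ ≤ lamMax A' * (y ⬝ᵥ y) := hray
  exact (mul_lt_mul_iff_of_pos_right hyy).1 hfin
end mainproof
end
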